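/- arXiv:1606.08060 — 3 statements merged into one kernel-verified Lean document; each statement's English description precedes it below -/
import Mathlib

section
/- Let L > 0 and let h : ℝ → ℝ be C² with h′(x) < 0 for all x and h(x+L) = h(x) − 1; let φ : ℝ → ℝ be its inverse function, i.e. h(φ(α)) = α for all α (so φ(α+1) = φ(α) − L). Then for every α ∈ (0,1), lim_{δ→0⁺} ( ∫₀^{α−δ} + ∫_{α+δ}¹ ) (π/L) · cot(π(φ(α)−φ(β))/L) dβ = −π · (H h′)(φ(α)), where H is the L-periodic Hilbert transform. -/
open Real Filter Topology MeasureTheory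

private lemma continuousAt_cot {s : ℝ} (hs : Real.sin s ≠ 0) : ContinuousAt Real.cot s := by
  have he : Real.cot = fun x => Real.cos x / Real.sin x := funext Real.cot_eq_cos_div_sin
  rw [he]
  exact Real.continuous_cos.continuousAt.div Real.continuous_sin.continuousAt hs

private lemma cot_sub_pi (t : ℝ) : Real.cot (t - π) = Real.cot t := by
  rw [Real.cot_eq_cos_div_sin, Real.cot_eq_cos_div_sin, Real.cos_sub_pi, Real.sin_sub_pi,
    neg_div_neg_eq]

private lemma sin_pos_aux {L s : ℝ} (hL : 0 < L) (h1 : 0 < s) (h2 : s < L) :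
    0 < Real.sin (π * s / L) := by
  apply Real.sin_pos_of_pos_of_lt_pi
  · positivity
  · rw [div_lt_iff₀ hL]
    have := Real.pi_pos
    nlinarith

private lemma sin_ne_aux {L s : ℝ} (hL : 0 < L) (h1 : -L < s) (h2 : s < 0) :
    Real.sin (π * s / L) ≠ 0 := by
  have h := sin_pos_aux hL (by linarith : 0 < -s) (by linarith : -s < L)
  have : Real.sin (π * s / L) = -Real.sin (π * (-s) / L) := by
    rw [show π * s / L = -(π * (-s) / L) by ring, Real.sin_neg]
  rw [this]
  exact neg_ne_zero.mpr (ne_of_gt h)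

private lemma abs_cot_le_aux {L s : ℝ} (hL : 0 < L) (h1 : L / 2 ≤ s) (h2 : s < L) :
    |Real.cot (π * s / L)| ≤ L / (2 * (L - s)) := by
  have hs0 : 0 < s := lt_of_lt_of_le (by linarith) h1
  have hsin : Real.sin (π * s / L) = Real.sin (π * (L - s) / L) := by
    rw [show π * (L - s) / L = π - π * s / L by field_simp, Real.sin_pi_sub]
  have hu0 : (0 : ℝ) ≤ π * (L - s) / L := by
    have hls : 0 < L - s := by linarith
    positivity
  have hu2 : π * (L - s) / L ≤ π / 2 := by
    rw [div_le_div_iff₀ hL (by norm_num : (0:ℝ) < 2)]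
    have := Real.pi_pos
    nlinarith
  have hsge : 2 / π * (π * (L - s) / L) ≤ Real.sin (π * (L - s) / L) :=
    Real.mul_le_sin hu0 hu2
  have hval : 2 / π * (π * (L - s) / L) = 2 * (L - s) / L := by
    field_simp
  have hsinpos : 0 < Real.sin (π * s / L) := sin_pos_aux hL hs0 h2
  rw [Real.cot_eq_cos_div_sin, abs_div]
  have hgoal : |Real.cos (π * s / L)| / |Real.sin (π * s / L)| ≤ 1 / (2 * (L - s) / L) := by
    have hls : 0 < L - s := by linarith
    apply div_le_div₀ (by positivity) (Real.abs_cos_le_one _) (by positivity)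
    rw [abs_of_pos hsinpos, hsin]
    linarith [hval ▸ hsge]
  calc |Real.cos (π * s / L)| / |Real.sin (π * s / L)| ≤ 1 / (2 * (L - s) / L) := hgoal
    _ = L / (2 * (L - s)) := by rw [one_div_div]

/-- Let `h` be `C²` with `h′ < 0` and `h(x+L) = h(x) − 1`, and let `φ` be its
inverse (`h(φ(α)) = α` for all `α`). If `Hh'` denotes the `L`-periodic Hilbert transform of `h′`
(characterized by the principal-value hypothesis `hH`), then for every `α ∈ (0,1)` the
principal-value integral `PV ∫₀¹ (π/L) cot(π(φ(α)−φ(β))/L) dβ` converges to `−π (H h′)(φ(α))`. -/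
theorem stmt_4 (L : ℝ) (hL : 0 < L) (h φ : ℝ → ℝ) (hh : ContDiff ℝ 2 h)
    (hmono : ∀ x, deriv h x < 0) (hper : ∀ x, h (x + L) = h x - 1)
    (hinv : ∀ α : ℝ, h (φ α) = α)
    (Hh' : ℝ → ℝ)
    (hH : ∀ x : ℝ, Tendsto (fun δ : ℝ =>
        (1 / L) * ∫ s in δ..(L - δ), deriv h (x - s) * Real.cot (π * s / L))
      (𝓝[>] (0:ℝ)) (𝓝 (Hh' x))) :
    ∀ α ∈ Set.Ioo (0:ℝ) 1,
      Tendsto (fun δ : ℝ =>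
          (∫ β in (0:ℝ)..(α - δ), (π / L) * Real.cot (π * (φ α - φ β) / L))
          + ∫ β in (α + δ)..1, (π / L) * Real.cot (π * (φ α - φ β) / L))
        (𝓝[>] (0:ℝ)) (𝓝 (-π * Hh' (φ α))) := by
  intro α hα
  obtain ⟨hα0, hα1⟩ := hα
  have hLne : L ≠ 0 := ne_of_gt hL
  have hdiff : Differentiable ℝ h := hh.differentiable (by norm_num)
  have hderivcont : Continuous (deriv h) := hh.continuous_deriv one_le_two
  have hanti : StrictAnti h := strictAnti_of_deriv_neg hmono
  have hlinv : ∀ y, φ (h y) = y := fun y => hanti.injective (hinv (h y))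
  have hφanti : StrictAnti φ := fun a b hab =>
    (hanti.lt_iff_gt).mp (by rw [hinv, hinv]; exact hab)
  have hφcont : Continuous φ := by
    have hm : Monotone fun a => φ (-a) := fun a b hab => hφanti.antitone (neg_le_neg hab)
    have hs : Function.Surjective fun a => φ (-a) := fun y => ⟨-h y, by simp [hlinv]⟩
    have hc := (hm.continuous_of_surjective hs).comp continuous_neg
    have heq : ((fun a => φ (-a)) ∘ fun a : ℝ => -a) = φ := by
      funext a; simp
    rwa [heq] at hc
  have hφderiv : ∀ a, HasDerivAt φ (deriv h (φ a))⁻¹ a := fun a =>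
    HasDerivAt.of_local_left_inverse hφcont.continuousAt (hdiff (φ a)).hasDerivAt
      (ne_of_lt (hmono _)) (Eventually.of_forall hinv)
  have hdper : ∀ y, deriv h (y + L) = deriv h y := by
    intro y
    have h1 : deriv (fun z => h (z + L)) y = deriv h (y + L) := deriv_comp_add_const h L y
    have h2 : (fun z => h (z + L)) = fun z => h z - 1 := funext hper
    rw [h2, deriv_sub_const] at h1
    exact h1.symm
  have hφper1 : φ 1 = φ 0 - L := by
    have h1 : h (φ 0 - L) = 1 := by
      have hp := hper (φ 0 - L)
      rw [sub_add_cancel, hinv] at hp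
      linarith
    calc φ 1 = φ (h (φ 0 - L)) := by rw [h1]
      _ = φ 0 - L := hlinv _
  set x := φ α with hx
  have hx1 : φ 1 < x := hφanti hα1
  have hx0 : x < φ 0 := hφanti hα0
  have hc_pos : 0 < x - φ 1 := by linarith
  have hc_lt : x - φ 1 < L := by
    rw [hφper1] at hx1 ⊢
    linarith
  -- the kernel
  set K : ℝ → ℝ := fun s => deriv h (x - s) * Real.cot (π * s / L) with hK
  clear_value K
  have hKcont : ∀ s ∈ Set.Ioo (0:ℝ) L, ContinuousAt K s := by
    intro s hs
    rw [hK]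
    apply ContinuousAt.mul
    · exact (hderivcont.comp (continuous_const.sub continuous_id)).continuousAt
    · have hinner : Continuous fun s : ℝ => π * s / L := by fun_prop
      exact ContinuousAt.comp (g := Real.cot) (f := fun s : ℝ => π * s / L)
        (continuousAt_cot (ne_of_gt (sin_pos_aux hL hs.1 hs.2))) hinner.continuousAt
  have hKint : ∀ a b : ℝ, a ∈ Set.Ioo (0:ℝ) L → b ∈ Set.Ioo (0:ℝ) L →
      IntervalIntegrable K volume a b := by
    intro a b ha hb
    apply ContinuousOn.intervalIntegrable
    intro s hs
    exact (hKcont s (Set.ordConnected_Ioo.uIcc_subset ha hb hs)).continuousWithinAt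
  have hKper : ∀ s, K (s - L) = K s := by
    intro s
    simp only [hK]
    rw [show x - (s - L) = (x - s) + L by ring, hdper,
      show π * (s - L) / L = π * s / L - π by field_simp, cot_sub_pi]
  -- the identity for fixed small δ
  have hIdent : ∀ δ : ℝ, 0 < δ → δ < α → α + δ < 1 →
      ((∫ β in (0:ℝ)..(α - δ), (π / L) * Real.cot (π * (x - φ β) / L))
        + ∫ β in (α + δ)..1, (π / L) * Real.cot (π * (x - φ β) / L))
      = -π * ((1 / L) * ∫ s in (x - φ (α + δ))..(L - (φ (α - δ) - x)), K s) := by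
    intro δ hδ0 hδα hδ1
    have hb1 : x < φ (α - δ) := hφanti (by linarith)
    have hb2 : φ (α + δ) < x := hφanti (by linarith)
    have hb0 : φ (α - δ) < φ 0 := hφanti (by linarith)
    have hb3 : φ 1 < φ (α + δ) := hφanti (by linarith)
    set g : ℝ → ℝ := fun u => (π / L) * Real.cot (π * (x - φ u) / L) with hg
    have hgat : ∀ u : ℝ, Real.sin (π * (x - φ u) / L) ≠ 0 → ContinuousAt g u := by
      intro u hu
      apply continuousAt_const.mul
      have hinner : Continuous fun u : ℝ => π * (x - φ u) / L := by fun_prop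
      exact ContinuousAt.comp (g := Real.cot) (f := fun u : ℝ => π * (x - φ u) / L)
        (continuousAt_cot hu) hinner.continuousAt
    -- left integral
    have hL1 : (∫ β in (0:ℝ)..(α - δ), g β)
        = ∫ y in (φ 0)..(φ (α - δ)), deriv h y • (g ∘ h) y := by
      have hgc : ContinuousOn g (h '' Set.uIcc (φ 0) (φ (α - δ))) := by
        intro u hu
        obtain ⟨y, hy, rfl⟩ := hu
        rw [Set.uIcc_of_ge hb0.le] at hy
        apply (hgat (h y) ?_).continuousWithinAt
        rw [hlinv y]
        apply sin_ne_aux hL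
        · rw [hφper1] at hx1; linarith [hy.2]
        · linarith [hy.1]
      have := intervalIntegral.integral_comp_smul_deriv'
        (f := h) (f' := deriv h) (g := g) (a := φ 0) (b := φ (α - δ))
        (fun y _ => (hdiff y).hasDerivAt) hderivcont.continuousOn hgc
      rw [hinv, hinv] at this
      exact this.symm
    have hR1 : (∫ β in (α + δ)..(1:ℝ), g β)
        = ∫ y in (φ (α + δ))..(φ 1), deriv h y • (g ∘ h) y := by
      have hgc : ContinuousOn g (h '' Set.uIcc (φ (α + δ)) (φ 1)) := by
        intro u hu
        obtain ⟨y, hy, rfl⟩ := hu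
        rw [Set.uIcc_of_ge hb3.le] at hy
        apply (hgat (h y) ?_).continuousWithinAt
        rw [hlinv y]
        apply ne_of_gt
        apply sin_pos_aux hL
        · linarith [hy.2]
        · rw [hφper1] at hy; linarith [hy.1, hx0]
      have := intervalIntegral.integral_comp_smul_deriv'
        (f := h) (f' := deriv h) (g := g) (a := φ (α + δ)) (b := φ 1)
        (fun y _ => (hdiff y).hasDerivAt) hderivcont.continuousOn hgc
      rw [hinv, hinv] at this
      exact this.symm
    -- rewrite integrands as (π/L) * K (x - y)
    have hLK : (∫ y in (φ 0)..(φ (α - δ)), deriv h y • (g ∘ h) y)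
        = (π / L) * ∫ y in (φ 0)..(φ (α - δ)), K (x - y) := by
      rw [← intervalIntegral.integral_const_mul]
      apply intervalIntegral.integral_congr
      intro y _
      simp only [Function.comp, smul_eq_mul, hg, hK, hlinv y, sub_sub_cancel]
      ring
    have hRK : (∫ y in (φ (α + δ))..(φ 1), deriv h y • (g ∘ h) y)
        = (π / L) * ∫ y in (φ (α + δ))..(φ 1), K (x - y) := by
      rw [← intervalIntegral.integral_const_mul]
      apply intervalIntegral.integral_congr
      intro y _
      simp only [Function.comp, smul_eq_mul, hg, hK, hlinv y, sub_sub_cancel]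
      ring
    have hLsub : (∫ y in (φ 0)..(φ (α - δ)), K (x - y))
        = ∫ s in (x - φ (α - δ))..(x - φ 0), K s :=
      intervalIntegral.integral_comp_sub_left K x
    have hRsub : (∫ y in (φ (α + δ))..(φ 1), K (x - y))
        = ∫ s in (x - φ 1)..(x - φ (α + δ)), K s :=
      intervalIntegral.integral_comp_sub_left K x
    -- shift left integral by period L
    have hshift : (∫ s in (x - φ (α - δ))..(x - φ 0), K s)
        = ∫ s in (L - (φ (α - δ) - x))..(x - φ 1), K s := by
      have h1 := intervalIntegral.integral_comp_sub_right
        (a := L - (φ (α - δ) - x)) (b := x - φ 1) K L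
      have h2 : (∫ s in (L - (φ (α - δ) - x))..(x - φ 1), K (s - L))
          = ∫ s in (L - (φ (α - δ) - x))..(x - φ 1), K s :=
        intervalIntegral.integral_congr fun s _ => hKper s
      rw [h2] at h1
      rw [show x - φ (α - δ) = L - (φ (α - δ) - x) - L from by ring,
        show x - φ 0 = x - φ 1 - L from by rw [hφper1]; ring]
      exact h1.symm
    -- combine
    have he2mem : x - φ (α + δ) ∈ Set.Ioo (0:ℝ) L := ⟨by linarith, by linarith⟩
    have hcmem : x - φ 1 ∈ Set.Ioo (0:ℝ) L := ⟨hc_pos, hc_lt⟩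
    have he1mem : L - (φ (α - δ) - x) ∈ Set.Ioo (0:ℝ) L := by
      have hφ0 : φ 0 = φ 1 + L := by rw [hφper1]; ring
      constructor
      · linarith
      · linarith
    have hadd : (∫ s in (L - (φ (α - δ) - x))..(x - φ 1), K s)
        + (∫ s in (x - φ 1)..(x - φ (α + δ)), K s)
        = ∫ s in (L - (φ (α - δ) - x))..(x - φ (α + δ)), K s :=
      intervalIntegral.integral_add_adjacent_intervals
        (hKint _ _ he1mem hcmem) (hKint _ _ hcmem he2mem)
    have hsymm : (∫ s in (L - (φ (α - δ) - x))..(x - φ (α + δ)), K s)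
        = -∫ s in (x - φ (α + δ))..(L - (φ (α - δ) - x)), K s :=
      intervalIntegral.integral_symm _ _
    calc ((∫ β in (0:ℝ)..(α - δ), g β) + ∫ β in (α + δ)..(1:ℝ), g β)
        = (π / L) * ((∫ s in (L - (φ (α - δ) - x))..(x - φ 1), K s)
            + ∫ s in (x - φ 1)..(x - φ (α + δ)), K s) := by
          rw [hL1, hR1, hLK, hRK, hLsub, hRsub, hshift]; ring
      _ = -π * ((1 / L) * ∫ s in (x - φ (α + δ))..(L - (φ (α - δ) - x)), K s) := by
          rw [hadd, hsymm]
          field_simp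
  -- limit analysis
  set e1 : ℝ → ℝ := fun δ => φ (α - δ) - x with he1
  set e2 : ℝ → ℝ := fun δ => x - φ (α + δ) with he2
  clear_value e1 e2
  have he1cont : Tendsto e1 (𝓝[>] 0) (𝓝 0) := by
    have : Continuous e1 := by
      rw [he1]
      exact (hφcont.comp (continuous_const.sub continuous_id)).sub continuous_const
    have h0 : e1 0 = 0 := by simp [he1, hx]
    have ht : Tendsto e1 (𝓝[>] 0) (𝓝 (e1 0)) := (this.tendsto 0).mono_left nhdsWithin_le_nhds
    rwa [h0] at ht
  have he2cont : Tendsto e2 (𝓝[>] 0) (𝓝 0) := by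
    have : Continuous e2 := by
      rw [he2]
      exact continuous_const.sub (hφcont.comp (continuous_const.add continuous_id))
    have h0 : e2 0 = 0 := by simp [he2, hx]
    have ht : Tendsto e2 (𝓝[>] 0) (𝓝 (e2 0)) := (this.tendsto 0).mono_left nhdsWithin_le_nhds
    rwa [h0] at ht
  have he1pos : ∀ δ : ℝ, 0 < δ → 0 < e1 δ := fun δ hδ => by
    have : x < φ (α - δ) := hφanti (by linarith)
    simp only [he1]; linarith
  have he2pos : ∀ δ : ℝ, 0 < δ → 0 < e2 δ := fun δ hδ => by
    have : φ (α + δ) < x := hφanti (by linarith)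
    simp only [he2]; linarith
  have hF1 : Tendsto e2 (𝓝[>] 0) (𝓝[>] 0) := by
    apply tendsto_nhdsWithin_of_tendsto_nhds_of_eventually_within _ he2cont
    filter_upwards [self_mem_nhdsWithin] with δ hδ
    exact he2pos δ hδ
  -- slope limits
  set d : ℝ := (deriv h x)⁻¹ with hd
  have hdneg : d < 0 := by rw [hd]; exact inv_lt_zero'.mpr (hmono x)
  have hslope : Tendsto (slope φ α) (𝓝[≠] α) (𝓝 d) :=
    hasDerivAt_iff_tendsto_slope.mp (hφderiv α)
  have hsub1 : Tendsto (fun δ : ℝ => α - δ) (𝓝[>] 0) (𝓝[≠] α) := by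
    apply tendsto_nhdsWithin_of_tendsto_nhds_of_eventually_within
    · have hc : Continuous fun δ : ℝ => α - δ := by fun_prop
      have : Tendsto (fun δ : ℝ => α - δ) (𝓝 0) (𝓝 α) := by
        simpa using hc.tendsto 0
      exact this.mono_left nhdsWithin_le_nhds
    · filter_upwards [self_mem_nhdsWithin] with δ hδ
      simp only [Set.mem_compl_iff, Set.mem_singleton_iff]
      intro hcon
      have : δ = 0 := by linarith [sub_eq_self.mp hcon]
      exact absurd this (ne_of_gt hδ)
  have hsub2 : Tendsto (fun δ : ℝ => α + δ) (𝓝[>] 0) (𝓝[≠] α) := by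
    apply tendsto_nhdsWithin_of_tendsto_nhds_of_eventually_within
    · have hc : Continuous fun δ : ℝ => α + δ := by fun_prop
      have : Tendsto (fun δ : ℝ => α + δ) (𝓝 0) (𝓝 α) := by
        simpa using hc.tendsto 0
      exact this.mono_left nhdsWithin_le_nhds
    · filter_upwards [self_mem_nhdsWithin] with δ hδ
      simp only [Set.mem_compl_iff, Set.mem_singleton_iff]
      intro hcon
      have : δ = 0 := by linarith [add_eq_left.mp hcon]
      exact absurd this (ne_of_gt hδ)
  have hr1 : Tendsto (fun δ : ℝ => e1 δ / δ) (𝓝[>] 0) (𝓝 (-d)) := by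
    have hcomp : Tendsto (fun δ : ℝ => slope φ α (α - δ)) (𝓝[>] 0) (𝓝 d) :=
      hslope.comp hsub1
    have heq : (fun δ : ℝ => e1 δ / δ) = fun δ : ℝ => -slope φ α (α - δ) := by
      funext δ
      simp only [he1]
      rw [slope_def_field, ← hx]
      rw [show α - δ - α = -δ by ring, div_neg, neg_neg]
    rw [heq]
    exact hcomp.neg
  have hr2 : Tendsto (fun δ : ℝ => e2 δ / δ) (𝓝[>] 0) (𝓝 (-d)) := by
    have hcomp : Tendsto (fun δ : ℝ => slope φ α (α + δ)) (𝓝[>] 0) (𝓝 d) :=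
      hslope.comp hsub2
    have heq : (fun δ : ℝ => e2 δ / δ) = fun δ : ℝ => -slope φ α (α + δ) := by
      funext δ
      simp only [he2]
      rw [slope_def_field, ← hx]
      rw [show α + δ - α = δ by ring, ← neg_div, neg_sub]
    rw [heq]
    exact hcomp.neg
  -- bound on deriv h
  obtain ⟨M, hM⟩ : ∃ M : ℝ, ∀ y ∈ Set.Icc (x - L) x, |deriv h y| ≤ M := by
    obtain ⟨M, hM⟩ := isCompact_Icc.exists_bound_of_continuousOn
      (s := Set.Icc (x - L) x) hderivcont.continuousOn
    exact ⟨M, fun y hy => by simpa [Real.norm_eq_abs] using hM y hy⟩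
  have hMnonneg : 0 ≤ M := le_trans (abs_nonneg _) (hM x ⟨by linarith, le_refl x⟩)
  -- the error piece tends to zero
  set Err : ℝ → ℝ := fun δ => (1 / L) * ∫ s in (L - e2 δ)..(L - e1 δ), K s with hErr
  set bnd : ℝ → ℝ := fun δ =>
    (M / 2) * |e1 δ / δ - e2 δ / δ| * (min (e1 δ / δ) (e2 δ / δ))⁻¹ with hbnd
  clear_value Err bnd
  have hbnd0 : Tendsto bnd (𝓝[>] 0) (𝓝 0) := by
    rw [hbnd]
    have h1 : Tendsto (fun δ : ℝ => |e1 δ / δ - e2 δ / δ|) (𝓝[>] 0) (𝓝 0) := by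
      have := (hr1.sub hr2).abs
      simpa using this
    have h2 : Tendsto (fun δ : ℝ => (min (e1 δ / δ) (e2 δ / δ))⁻¹) (𝓝[>] 0) (𝓝 (-d)⁻¹) := by
      have hne : min (-d) (-d) ≠ 0 := by rw [min_self]; exact ne_of_gt (by linarith)
      have h3 := (hr1.min hr2).inv₀ hne
      rw [min_self] at h3
      exact h3
    have := ((tendsto_const_nhds (x := M / 2)).mul h1).mul h2
    simpa using this
  have hErr0 : Tendsto Err (𝓝[>] 0) (𝓝 0) := by
    apply squeeze_zero_norm' _ hbnd0
    have hev1 : ∀ᶠ δ : ℝ in 𝓝[>] 0, e1 δ < L / 2 :=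
      (he1cont.eventually (eventually_lt_nhds (by linarith : (0:ℝ) < L / 2)))
    have hev2 : ∀ᶠ δ : ℝ in 𝓝[>] 0, e2 δ < L / 2 :=
      (he2cont.eventually (eventually_lt_nhds (by linarith : (0:ℝ) < L / 2)))
    filter_upwards [self_mem_nhdsWithin, hev1, hev2] with δ hδ he1h he2h
    have hδ0 : (0:ℝ) < δ := hδ
    have hp1 : 0 < e1 δ := he1pos δ hδ0
    have hp2 : 0 < e2 δ := he2pos δ hδ0
    set m := min (e1 δ) (e2 δ) with hm
    clear_value m
    have hm0 : 0 < m := by rw [hm]; exact lt_min hp1 hp2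
    have hmle : m ≤ L / 2 := by rw [hm]; exact le_trans (min_le_left _ _) he1h.le
    -- pointwise bound on the kernel on the relevant interval
    have hptb : ∀ s ∈ Set.uIoc (L - e2 δ) (L - e1 δ), ‖K s‖ ≤ M * (L / (2 * m)) := by
      intro s hs
      have hsmem : L - max (e1 δ) (e2 δ) < s ∧ s ≤ L - m := by
        have hmax1 := le_max_left (e1 δ) (e2 δ)
        have hmax2 := le_max_right (e1 δ) (e2 δ)
        have hmin1 := min_le_left (e1 δ) (e2 δ)
        have hmin2 := min_le_right (e1 δ) (e2 δ)
        rcases Set.mem_uIoc.mp hs with hcase | hcase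
        · exact ⟨by linarith [hcase.1], by linarith [hcase.2]⟩
        · exact ⟨by linarith [hcase.1], by linarith [hcase.2]⟩
      have hs2 : L / 2 ≤ s := by
        have : max (e1 δ) (e2 δ) ≤ L / 2 := max_le he1h.le he2h.le
        linarith [hsmem.1]
      have hsL : s < L := by linarith [hsmem.2]
      have hLs : m ≤ L - s := by linarith [hsmem.2]
      have hcotb : |Real.cot (π * s / L)| ≤ L / (2 * (L - s)) := abs_cot_le_aux hL hs2 hsL
      have hcotb2 : L / (2 * (L - s)) ≤ L / (2 * m) := by
        apply div_le_div_of_nonneg_left hL.le (by linarith)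
        linarith
      have hMb : |deriv h (x - s)| ≤ M := by
        apply hM
        constructor
        · linarith
        · linarith
      calc ‖K s‖ = |deriv h (x - s)| * |Real.cot (π * s / L)| := by
            simp [hK, Real.norm_eq_abs, abs_mul]
        _ ≤ M * (L / (2 * m)) := by
            apply mul_le_mul hMb (le_trans hcotb hcotb2) (abs_nonneg _) hMnonneg
    have hintb : ‖∫ s in (L - e2 δ)..(L - e1 δ), K s‖
        ≤ M * (L / (2 * m)) * |(L - e1 δ) - (L - e2 δ)| :=
      intervalIntegral.norm_integral_le_of_norm_le_const hptb
    have hfinal : ‖Err δ‖ ≤ bnd δ := by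
      have hnorm : ‖Err δ‖ = (1 / L) * ‖∫ s in (L - e2 δ)..(L - e1 δ), K s‖ := by
        simp only [hErr, norm_mul, Real.norm_eq_abs, abs_of_pos (by positivity : (0:ℝ) < 1 / L)]
      have hbeq : bnd δ = M * |e1 δ - e2 δ| / (2 * m) := by
        simp only [hbnd]
        rw [show e1 δ / δ - e2 δ / δ = (e1 δ - e2 δ) / δ by ring,
          abs_div, abs_of_pos hδ0]
        rw [min_div_div_right hδ0.le, ← hm]
        field_simp
      rw [hnorm, hbeq]
      have habs : |(L - e1 δ) - (L - e2 δ)| = |e1 δ - e2 δ| := by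
        rw [show (L - e1 δ) - (L - e2 δ) = -(e1 δ - e2 δ) by ring, abs_neg]
      calc (1 / L) * ‖∫ s in (L - e2 δ)..(L - e1 δ), K s‖
          ≤ (1 / L) * (M * (L / (2 * m)) * |e1 δ - e2 δ|) := by
            apply mul_le_mul_of_nonneg_left _ (by positivity)
            rw [← habs]; exact hintb
        _ = M * |e1 δ - e2 δ| / (2 * m) := by field_simp
    exact hfinal
  -- main piece
  have hMain : Tendsto (fun δ : ℝ => (1 / L) * ∫ s in (e2 δ)..(L - e2 δ), K s)
      (𝓝[>] 0) (𝓝 (Hh' x)) := by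
    simp only [hK]
    exact (hH x).comp hF1
  -- combine
  have hJ : Tendsto (fun δ : ℝ => (1 / L) * ∫ s in (e2 δ)..(L - e1 δ), K s)
      (𝓝[>] 0) (𝓝 (Hh' x)) := by
    have hsum := hMain.add hErr0
    rw [add_zero] at hsum
    apply hsum.congr'
    have hev1 : ∀ᶠ δ : ℝ in 𝓝[>] 0, e1 δ < L / 2 :=
      (he1cont.eventually (eventually_lt_nhds (by linarith : (0:ℝ) < L / 2)))
    have hev2 : ∀ᶠ δ : ℝ in 𝓝[>] 0, e2 δ < L / 2 :=
      (he2cont.eventually (eventually_lt_nhds (by linarith : (0:ℝ) < L / 2)))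
    filter_upwards [self_mem_nhdsWithin, hev1, hev2] with δ hδ he1h he2h
    have hδ0 : (0:ℝ) < δ := hδ
    have hp1 : 0 < e1 δ := he1pos δ hδ0
    have hp2 : 0 < e2 δ := he2pos δ hδ0
    have h1 : e2 δ ∈ Set.Ioo (0:ℝ) L := ⟨hp2, by linarith⟩
    have h2 : L - e2 δ ∈ Set.Ioo (0:ℝ) L := ⟨by linarith, by linarith⟩
    have h3 : L - e1 δ ∈ Set.Ioo (0:ℝ) L := ⟨by linarith, by linarith⟩
    have hadd := intervalIntegral.integral_add_adjacent_intervals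
      (hKint _ _ h1 h2) (hKint _ _ h2 h3)
    simp only [hErr]
    rw [← hadd]
    ring
  have hfinalT : Tendsto (fun δ : ℝ =>
      -π * ((1 / L) * ∫ s in (e2 δ)..(L - e1 δ), K s)) (𝓝[>] 0) (𝓝 (-π * Hh' x)) :=
    hJ.const_mul (-π)
  apply hfinalT.congr'
  have hevα : ∀ᶠ δ : ℝ in 𝓝[>] 0, δ < α :=
    (eventually_lt_nhds hα0).filter_mono nhdsWithin_le_nhds
  have hevβ : ∀ᶠ δ : ℝ in 𝓝[>] 0, δ < 1 - α :=
    (eventually_lt_nhds (by linarith : (0:ℝ) < 1 - α)).filter_mono nhdsWithin_le_nhds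
  filter_upwards [self_mem_nhdsWithin, hevα, hevβ] with δ hδ hδα hδβ
  have hδ0 : (0:ℝ) < δ := hδ
  simp only [he1, he2]
  exact (hIdent δ hδ0 hδα (by linarith)).symm
end

section
/- Fix an integer N ≥ 2, L > 0, a := 1/N. Along any C¹ solution x(t) of the step-flow ODE system (with x_{i+N}(t) = x_i(t) + L and x_i(t) < x_{i+1}(t)), the energy identity (d/dt) E^N(x(t)) = − Σ_{i=1}^{N} (f_{i+1}(t) − f_i(t))² / (x_{i+1}(t) − x_i(t)) holds for all t, where f_{N+1} := f₁ by periodicity. In particular E^N(x(t)) is nonincreasing in t. -/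
open Real Filter Topology

/-- The chemical potential `f_i` of a (periodic) step configuration `c : ℤ → ℝ`
(with `c (i+N) = c i + L`), `a := 1/N`; the lattice sum is over the period window
`j ∈ {i+1, …, i+N−1}`, which by `π`-periodicity of `cot` agrees with `Σ_{j=1,j≠i}^N`
and makes `f_{i+N} = f_i` (so in particular `f_{N+1} = f_1`) manifest. -/
noncomputable def fchem (N : ℕ) (L : ℝ) (c : ℤ → ℝ) (i : ℤ) : ℝ :=
  -(2 * π * (N:ℝ)⁻¹ / L ^ 2) *
      (∑ j ∈ Finset.Ico (i + 1) (i + (N:ℤ)), Real.cot (π * (c j - c i) / L))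
    + (1 / (c (i + 1) - c i) - 1 / (c i - c (i - 1)))
    + ((N:ℝ)⁻¹ ^ 2 / (c (i + 1) - c i) ^ 3 - (N:ℝ)⁻¹ ^ 2 / (c i - c (i - 1)) ^ 3)

/-- The right-hand side of the step-flow ODE system, `a = 1/N`. -/
noncomputable def Fvel (N : ℕ) (L : ℝ) (c : ℤ → ℝ) (i : ℤ) : ℝ :=
  (N:ℝ) * ((fchem N L c (i + 1) - fchem N L c i) / (c (i + 1) - c i)
    - (fchem N L c i - fchem N L c (i - 1)) / (c i - c (i - 1)))

/-- The discrete energy `E^N`, `a = 1/N`, with convention `c_{N+1} = c_1 + L`. -/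
noncomputable def energyN (N : ℕ) (L : ℝ) (c : ℤ → ℝ) : ℝ :=
  (N:ℝ)⁻¹ ^ 2 * ∑ i ∈ Finset.Icc (1:ℤ) (N:ℤ), ∑ j ∈ Finset.Ioc i (N:ℤ),
      (2 / L) * Real.log |Real.sin (π * (c j - c i) / L)|
    + (N:ℝ)⁻¹ * ∑ i ∈ Finset.Icc (1:ℤ) (N:ℤ),
      (-Real.log ((c (i + 1) - c i) * (N:ℝ)) + ((N:ℝ)⁻¹ ^ 2 / 2) / (c (i + 1) - c i) ^ 2)

lemma mycot_neg (x : ℝ) : Real.cot (-x) = - Real.cot x := by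
  simp [Real.cot_eq_cos_div_sin, Real.cos_neg, Real.sin_neg, div_neg, neg_div]

lemma mycot_add_pi (x : ℝ) : Real.cot (x + π) = Real.cot x := by
  simp [Real.cot_eq_cos_div_sin, Real.sin_add, Real.cos_add]

lemma sum_shift (M : ℤ) (hM : 1 ≤ M) (G : ℤ → ℝ) (h : G (M+1) = G 1) :
    ∑ k ∈ Finset.Icc 1 M, G (k+1) = ∑ k ∈ Finset.Icc 1 M, G k := by
  have h1 : ∑ k ∈ Finset.Icc 1 M, G (k+1) = ∑ k ∈ Finset.Icc 2 (M+1), G k := by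
    have : Finset.Icc (2:ℤ) (M+1) = Finset.map (addRightEmbedding 1) (Finset.Icc 1 M) := by
      rw [Finset.map_add_right_Icc]; norm_num
    rw [this, Finset.sum_map]
    simp [addRightEmbedding_apply]
  rw [h1]
  have e1 : Finset.Icc (2:ℤ) (M+1) = insert (M+1) (Finset.Icc 2 M) := by
    ext k; simp [Finset.mem_Icc, Finset.mem_insert]; omega
  have e2 : Finset.Icc (1:ℤ) M = insert 1 (Finset.Icc 2 M) := by
    ext k; simp [Finset.mem_Icc, Finset.mem_insert]; omega
  rw [e1, e2, Finset.sum_insert (by intro hmem; simp [Finset.mem_Icc] at hmem),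
    Finset.sum_insert (by intro hmem; simp [Finset.mem_Icc] at hmem), h]

lemma sum_swap_tri (M : ℤ) (F : ℤ → ℤ → ℝ) :
    ∑ i ∈ Finset.Icc 1 M, ∑ j ∈ Finset.Ioc i M, F i j
      = ∑ j ∈ Finset.Icc 1 M, ∑ i ∈ Finset.Icc 1 (j-1), F i j := by
  have h1 : ∀ i ∈ Finset.Icc (1:ℤ) M, ∑ j ∈ Finset.Ioc i M, F i j
      = ∑ j ∈ Finset.Icc (1:ℤ) M, if i < j then F i j else 0 := by
    intro i hi
    simp only [Finset.mem_Icc] at hi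
    rw [← Finset.sum_filter]
    congr 1
    ext j; simp only [Finset.mem_Ioc, Finset.mem_filter, Finset.mem_Icc]; omega
  have h2 : ∀ j ∈ Finset.Icc (1:ℤ) M, (∑ i ∈ Finset.Icc (1:ℤ) M, if i < j then F i j else 0)
      = ∑ i ∈ Finset.Icc (1:ℤ) (j-1), F i j := by
    intro j hj
    simp only [Finset.mem_Icc] at hj
    rw [← Finset.sum_filter]
    congr 1
    ext i; simp only [Finset.mem_filter, Finset.mem_Icc]; omega
  rw [Finset.sum_congr rfl h1, Finset.sum_comm, Finset.sum_congr rfl h2]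

lemma fchem_period (N : ℕ) (L : ℝ) (hL : L ≠ 0) (c : ℤ → ℝ)
    (hc : ∀ j : ℤ, c (j + (N:ℤ)) = c j + L) (i : ℤ) :
    fchem N L c (i + (N:ℤ)) = fchem N L c i := by
  have e1 : c (i + (N:ℤ) + 1) = c (i + 1) + L := by
    rw [show i + (N:ℤ) + 1 = (i+1) + (N:ℤ) by ring, hc]
  have e2 : c (i + (N:ℤ) - 1) = c (i - 1) + L := by
    rw [show i + (N:ℤ) - 1 = (i-1) + (N:ℤ) by ring, hc]
  have e3 : ∑ j ∈ Finset.Ico (i + (N:ℤ) + 1) (i + (N:ℤ) + (N:ℤ)), Real.cot (π * (c j - c (i + (N:ℤ))) / L)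
      = ∑ j ∈ Finset.Ico (i + 1) (i + (N:ℤ)), Real.cot (π * (c j - c i) / L) := by
    have : Finset.Ico (i + (N:ℤ) + 1) (i + (N:ℤ) + (N:ℤ))
        = Finset.map (addRightEmbedding (N:ℤ)) (Finset.Ico (i+1) (i + (N:ℤ))) := by
      rw [Finset.map_add_right_Ico]; ring_nf
    rw [this, Finset.sum_map]
    apply Finset.sum_congr rfl
    intro j _
    simp only [addRightEmbedding_apply]
    rw [hc j, hc i]
    ring_nf
  have d1 : c (i + (N:ℤ) + 1) - c (i + (N:ℤ)) = c (i + 1) - c i := by rw [e1, hc i]; ring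
  have d2 : c (i + (N:ℤ)) - c (i + (N:ℤ) - 1) = c i - c (i - 1) := by rw [e2, hc i]; ring
  unfold fchem
  rw [e3, d1, d2]

lemma Fvel_period (N : ℕ) (L : ℝ) (hL : L ≠ 0) (c : ℤ → ℝ)
    (hc : ∀ j : ℤ, c (j + (N:ℤ)) = c j + L) (i : ℤ) :
    Fvel N L c (i + (N:ℤ)) = Fvel N L c i := by
  have e1 : c (i + (N:ℤ) + 1) = c (i + 1) + L := by
    rw [show i + (N:ℤ) + 1 = (i+1) + (N:ℤ) by ring, hc]
  have e2 : c (i + (N:ℤ) - 1) = c (i - 1) + L := by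
    rw [show i + (N:ℤ) - 1 = (i-1) + (N:ℤ) by ring, hc]
  have f1 : fchem N L c (i + (N:ℤ) + 1) = fchem N L c (i + 1) := by
    rw [show i + (N:ℤ) + 1 = (i+1) + (N:ℤ) by ring, fchem_period N L hL c hc]
  have f2 : fchem N L c (i + (N:ℤ) - 1) = fchem N L c (i - 1) := by
    rw [show i + (N:ℤ) - 1 = (i-1) + (N:ℤ) by ring, fchem_period N L hL c hc]
  unfold Fvel
  rw [e1, e2, f1, f2, fchem_period N L hL c hc, hc i]
  ring_nf

lemma cot_window (N : ℕ) (hN : 2 ≤ N) (L : ℝ) (hL : L ≠ 0) (c : ℤ → ℝ)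
    (hc : ∀ j : ℤ, c (j + (N:ℤ)) = c j + L) (k : ℤ) (hk1 : 1 ≤ k) (hk2 : k ≤ (N:ℤ)) :
    ∑ j ∈ Finset.Ico (k + 1) (k + (N:ℤ)), Real.cot (π * (c j - c k) / L)
      = ∑ j ∈ Finset.Ioc k (N:ℤ), Real.cot (π * (c j - c k) / L)
        + ∑ i ∈ Finset.Icc 1 (k-1), Real.cot (π * (c i - c k) / L) := by
  have hNN : (2:ℤ) ≤ (N:ℤ) := by exact_mod_cast hN
  rw [← Finset.Ico_union_Ico_eq_Ico (show k+1 ≤ (N:ℤ)+1 by omega) (show (N:ℤ)+1 ≤ k+(N:ℤ) by omega),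
    Finset.sum_union (Finset.Ico_disjoint_Ico_consecutive _ _ _)]
  congr 1
  · congr 1
    ext j; simp only [Finset.mem_Ico, Finset.mem_Ioc]; omega
  · have : Finset.Ico ((N:ℤ)+1) (k + (N:ℤ))
        = Finset.map (addRightEmbedding (N:ℤ)) (Finset.Ico 1 k) := by
      rw [Finset.map_add_right_Ico]; ring_nf
    rw [this, Finset.sum_map]
    have e : Finset.Ico (1:ℤ) k = Finset.Icc 1 (k-1) := by
      ext j; simp only [Finset.mem_Ico, Finset.mem_Icc]; omega
    rw [e]
    apply Finset.sum_congr rfl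
    intro j _
    simp only [addRightEmbedding_apply]
    rw [hc j, show π * (c j + L - c k) / L = π * (c j - c k) / L + π by field_simp; ring,
      mycot_add_pi]

noncomputable def Wc (N : ℕ) (L : ℝ) (c : ℤ → ℝ) (k : ℤ) : ℝ :=
  ∑ j ∈ Finset.Ico (k + 1) (k + (N:ℤ)), Real.cot (π * (c j - c k) / L)

noncomputable def dd (c : ℤ → ℝ) (k : ℤ) : ℝ := c (k+1) - c k

noncomputable def gg (N : ℕ) (c : ℤ → ℝ) (k : ℤ) : ℝ :=
  -(1 / dd c k) - (N:ℝ)⁻¹^2 / (dd c k)^3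

noncomputable def hh (N : ℕ) (L : ℝ) (c : ℤ → ℝ) (k : ℤ) : ℝ :=
  (fchem N L c (k+1) - fchem N L c k) / dd c k

lemma fchem_eq (N : ℕ) (L : ℝ) (c : ℤ → ℝ) (k : ℤ) :
    fchem N L c k = -(2 * π * (N:ℝ)⁻¹ / L ^ 2) * Wc N L c k
      + (1 / dd c k - 1 / dd c (k-1)) + ((N:ℝ)⁻¹^2 / (dd c k)^3 - (N:ℝ)⁻¹^2 / (dd c (k-1))^3) := by
  unfold fchem Wc dd
  rw [show k - 1 + 1 = k by ring]

lemma Fvel_eq (N : ℕ) (L : ℝ) (c : ℤ → ℝ) (k : ℤ) :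
    Fvel N L c k = (N:ℝ) * (hh N L c k - hh N L c (k-1)) := by
  unfold Fvel hh dd
  rw [show k - 1 + 1 = k by ring]

lemma dd_period (N : ℕ) (L : ℝ) (c : ℤ → ℝ)
    (hc : ∀ j : ℤ, c (j + (N:ℤ)) = c j + L) (k : ℤ) : dd c (k + (N:ℤ)) = dd c k := by
  unfold dd
  rw [show k + (N:ℤ) + 1 = (k+1) + (N:ℤ) by ring, hc, hc]
  ring
lemma algebra_main (N : ℕ) (hN : 2 ≤ N) (L : ℝ) (hL : L ≠ 0) (c : ℤ → ℝ)
    (hc : ∀ j : ℤ, c (j + (N:ℤ)) = c j + L) (hd : ∀ k : ℤ, c k < c (k+1)) :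
    (N:ℝ)⁻¹^2 * ∑ i ∈ Finset.Icc (1:ℤ) (N:ℤ), ∑ j ∈ Finset.Ioc i (N:ℤ),
        (2*π/L^2) * (Real.cot (π*(c j - c i)/L) * (Fvel N L c j - Fvel N L c i))
      + (N:ℝ)⁻¹ * ∑ i ∈ Finset.Icc (1:ℤ) (N:ℤ),
        ((-(1/(c (i+1) - c i)) - (N:ℝ)⁻¹^2/(c (i+1) - c i)^3) * (Fvel N L c (i+1) - Fvel N L c i))
      = -(∑ i ∈ Finset.Icc (1:ℤ) (N:ℤ),
          (fchem N L c (i+1) - fchem N L c i)^2 / (c (i+1) - c i)) := by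
  have hNz : ((N:ℝ)) ≠ 0 := Nat.cast_ne_zero.mpr (by omega)
  have hN1 : (1:ℤ) ≤ (N:ℤ) := by exact_mod_cast Nat.one_le_of_lt hN
  have hddne : ∀ k : ℤ, dd c k ≠ 0 := by
    intro k; unfold dd; exact ne_of_gt (sub_pos.mpr (hd k))
  -- periodicity facts
  have fper1 : fchem N L c ((N:ℤ)+1) = fchem N L c 1 := by
    rw [show (N:ℤ)+1 = 1+(N:ℤ) by ring]; exact fchem_period N L hL c hc 1
  have fper0 : fchem N L c (N:ℤ) = fchem N L c 0 := by
    have := fchem_period N L hL c hc 0; rwa [zero_add] at this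
  have vper1 : Fvel N L c ((N:ℤ)+1) = Fvel N L c 1 := by
    rw [show (N:ℤ)+1 = 1+(N:ℤ) by ring]; exact Fvel_period N L hL c hc 1
  have ddper0 : dd c (N:ℤ) = dd c 0 := by
    have := dd_period N L c hc 0; rwa [zero_add] at this
  have hhper : hh N L c (N:ℤ) = hh N L c 0 := by
    unfold hh; rw [ddper0, fper1, fper0, zero_add]
  have ggper : gg N c (N:ℤ) = gg N c 0 := by unfold gg; rw [ddper0]
  -- core double-sum identity
  have core : ∑ i ∈ Finset.Icc (1:ℤ) (N:ℤ), ∑ j ∈ Finset.Ioc i (N:ℤ),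
      Real.cot (π*(c j - c i)/L) * (Fvel N L c j - Fvel N L c i)
      = ∑ k ∈ Finset.Icc (1:ℤ) (N:ℤ), (-(Wc N L c k * Fvel N L c k)) := by
    have expand : ∀ i j : ℤ, Real.cot (π*(c j - c i)/L) * (Fvel N L c j - Fvel N L c i)
        = Real.cot (π*(c j - c i)/L) * Fvel N L c j
          - Real.cot (π*(c j - c i)/L) * Fvel N L c i := fun i j => by ring
    simp only [expand, Finset.sum_sub_distrib]
    have hA : ∑ i ∈ Finset.Icc (1:ℤ) (N:ℤ), ∑ j ∈ Finset.Ioc i (N:ℤ),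
        Real.cot (π*(c j - c i)/L) * Fvel N L c j
        = ∑ k ∈ Finset.Icc (1:ℤ) (N:ℤ),
            -((∑ i ∈ Finset.Icc (1:ℤ) (k-1), Real.cot (π*(c i - c k)/L)) * Fvel N L c k) := by
      rw [sum_swap_tri (N:ℤ) (fun i j => Real.cot (π*(c j - c i)/L) * Fvel N L c j)]
      apply Finset.sum_congr rfl
      intro k _
      rw [← Finset.sum_mul, ← neg_mul]
      congr 1
      rw [← Finset.sum_neg_distrib]
      apply Finset.sum_congr rfl
      intro i _
      rw [show π*(c k - c i)/L = -(π*(c i - c k)/L) by ring, mycot_neg]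
    have hB : ∑ i ∈ Finset.Icc (1:ℤ) (N:ℤ), ∑ j ∈ Finset.Ioc i (N:ℤ),
        Real.cot (π*(c j - c i)/L) * Fvel N L c i
        = ∑ k ∈ Finset.Icc (1:ℤ) (N:ℤ),
            (∑ j ∈ Finset.Ioc k (N:ℤ), Real.cot (π*(c j - c k)/L)) * Fvel N L c k := by
      apply Finset.sum_congr rfl
      intro k _
      rw [← Finset.sum_mul]
    rw [hA, hB, ← Finset.sum_sub_distrib]
    apply Finset.sum_congr rfl
    intro k hk
    simp only [Finset.mem_Icc] at hk
    have hW : Wc N L c k = ∑ j ∈ Finset.Ioc k (N:ℤ), Real.cot (π * (c j - c k) / L)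
        + ∑ i ∈ Finset.Icc 1 (k-1), Real.cot (π * (c i - c k) / L) := by
      unfold Wc; exact cot_window N hN L hL c hc k hk.1 hk.2
    rw [hW]; ring
  -- pair-sum part
  have S1 : ∑ i ∈ Finset.Icc (1:ℤ) (N:ℤ), ∑ j ∈ Finset.Ioc i (N:ℤ),
      (2*π/L^2) * (Real.cot (π*(c j - c i)/L) * (Fvel N L c j - Fvel N L c i))
      = ∑ k ∈ Finset.Icc (1:ℤ) (N:ℤ), (2*π/L^2) * (-(Wc N L c k * Fvel N L c k)) := by
    calc ∑ i ∈ Finset.Icc (1:ℤ) (N:ℤ), ∑ j ∈ Finset.Ioc i (N:ℤ),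
        (2*π/L^2) * (Real.cot (π*(c j - c i)/L) * (Fvel N L c j - Fvel N L c i))
        = (2*π/L^2) * ∑ i ∈ Finset.Icc (1:ℤ) (N:ℤ), ∑ j ∈ Finset.Ioc i (N:ℤ),
            Real.cot (π*(c j - c i)/L) * (Fvel N L c j - Fvel N L c i) := by
          simp only [← Finset.mul_sum]
      _ = (2*π/L^2) * ∑ k ∈ Finset.Icc (1:ℤ) (N:ℤ), (-(Wc N L c k * Fvel N L c k)) := by rw [core]
      _ = ∑ k ∈ Finset.Icc (1:ℤ) (N:ℤ), (2*π/L^2) * (-(Wc N L c k * Fvel N L c k)) :=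
          Finset.mul_sum _ _ _
  -- neighbor part
  have S2 : ∑ i ∈ Finset.Icc (1:ℤ) (N:ℤ),
      ((-(1/(c (i+1) - c i)) - (N:ℝ)⁻¹^2/(c (i+1) - c i)^3) * (Fvel N L c (i+1) - Fvel N L c i))
      = ∑ k ∈ Finset.Icc (1:ℤ) (N:ℤ), (gg N c (k-1) - gg N c k) * Fvel N L c k := by
    have e0 : ∀ i : ℤ, (-(1/(c (i+1) - c i)) - (N:ℝ)⁻¹^2/(c (i+1) - c i)^3) = gg N c i := by
      intro i; unfold gg dd; rfl
    simp only [e0]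
    have expand : ∀ i : ℤ, gg N c i * (Fvel N L c (i+1) - Fvel N L c i)
        = gg N c i * Fvel N L c (i+1) - gg N c i * Fvel N L c i := fun i => by ring
    simp only [expand, Finset.sum_sub_distrib]
    have shift : ∑ k ∈ Finset.Icc (1:ℤ) (N:ℤ), gg N c k * Fvel N L c (k+1)
        = ∑ k ∈ Finset.Icc (1:ℤ) (N:ℤ), gg N c (k-1) * Fvel N L c k := by
      have hs := sum_shift (N:ℤ) hN1 (fun k => gg N c (k-1) * Fvel N L c k)
        (by show gg N c ((N:ℤ)+1-1) * Fvel N L c ((N:ℤ)+1) = gg N c (1-1) * Fvel N L c 1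
            rw [add_sub_cancel_right, show (1:ℤ)-1 = 0 by ring, ggper, vper1])
      rw [← hs]
      apply Finset.sum_congr rfl
      intro k _
      simp only [add_sub_cancel_right]
    rw [shift, ← Finset.sum_sub_distrib]
    apply Finset.sum_congr rfl
    intro k _
    ring
  rw [S1, S2, Finset.mul_sum, Finset.mul_sum, ← Finset.sum_add_distrib]
  -- single-sum reduction
  have S3 : ∑ k ∈ Finset.Icc (1:ℤ) (N:ℤ),
      ((N:ℝ)⁻¹^2 * ((2*π/L^2) * (-(Wc N L c k * Fvel N L c k)))
        + (N:ℝ)⁻¹ * ((gg N c (k-1) - gg N c k) * Fvel N L c k))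
      = ∑ k ∈ Finset.Icc (1:ℤ) (N:ℤ), fchem N L c k * (hh N L c k - hh N L c (k-1)) := by
    apply Finset.sum_congr rfl
    intro k _
    rw [fchem_eq N L c k, Fvel_eq N L c k]
    unfold gg
    have h1 := hddne k
    have h2 := hddne (k-1)
    field_simp
    ring
  rw [S3]
  -- Abel summation
  have expand : ∀ k : ℤ, fchem N L c k * (hh N L c k - hh N L c (k-1))
      = fchem N L c k * hh N L c k - fchem N L c k * hh N L c (k-1) := fun k => by ring
  simp only [expand, Finset.sum_sub_distrib]
  have shift : ∑ k ∈ Finset.Icc (1:ℤ) (N:ℤ), fchem N L c k * hh N L c (k-1)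
      = ∑ k ∈ Finset.Icc (1:ℤ) (N:ℤ), fchem N L c (k+1) * hh N L c k := by
    have hs := sum_shift (N:ℤ) hN1 (fun k => fchem N L c k * hh N L c (k-1))
      (by show fchem N L c ((N:ℤ)+1) * hh N L c ((N:ℤ)+1-1) = fchem N L c 1 * hh N L c (1-1)
          rw [add_sub_cancel_right, show (1:ℤ)-1 = 0 by ring, fper1, hhper])
    rw [← hs]
    apply Finset.sum_congr rfl
    intro k _
    simp only [add_sub_cancel_right]
  rw [shift, ← Finset.sum_sub_distrib, show -(∑ i ∈ Finset.Icc (1:ℤ) (N:ℤ),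
      (fchem N L c (i+1) - fchem N L c i)^2 / (c (i+1) - c i))
      = ∑ i ∈ Finset.Icc (1:ℤ) (N:ℤ),
        -((fchem N L c (i+1) - fchem N L c i)^2 / (c (i+1) - c i)) from
    (Finset.sum_neg_distrib _).symm]
  apply Finset.sum_congr rfl
  intro k _
  unfold hh dd
  ring
lemma deriv_energy (N : ℕ) (hN : 2 ≤ N) (L : ℝ) (hL : 0 < L) (x : ℝ → ℤ → ℝ)
    (hper : ∀ t : ℝ, ∀ i : ℤ, x t (i + (N:ℤ)) = x t i + L)
    (hmono : ∀ t : ℝ, ∀ i : ℤ, x t i < x t (i + 1))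
    (hode : ∀ i : ℤ, ∀ t : ℝ, HasDerivAt (fun s => x s i) (Fvel N L (x t) i) t) (t : ℝ) :
    HasDerivAt (fun s => energyN N L (x s))
      ((N:ℝ)⁻¹^2 * ∑ i ∈ Finset.Icc (1:ℤ) (N:ℤ), ∑ j ∈ Finset.Ioc i (N:ℤ),
          (2*π/L^2) * (Real.cot (π*(x t j - x t i)/L) * (Fvel N L (x t) j - Fvel N L (x t) i))
        + (N:ℝ)⁻¹ * ∑ i ∈ Finset.Icc (1:ℤ) (N:ℤ),
          ((-(1/(x t (i+1) - x t i)) - (N:ℝ)⁻¹^2/(x t (i+1) - x t i)^3)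
            * (Fvel N L (x t) (i+1) - Fvel N L (x t) i))) t := by
  have hLne : L ≠ 0 := ne_of_gt hL
  have hNpos : (0:ℝ) < (N:ℝ) := Nat.cast_pos.mpr (by omega)
  have hms : StrictMono (x t) := strictMono_int_of_lt_succ (fun i => hmono t i)
  have hpair : ∀ i ∈ Finset.Icc (1:ℤ) (N:ℤ), ∀ j ∈ Finset.Ioc i (N:ℤ),
      HasDerivAt (fun s => (2 / L) * Real.log |Real.sin (π * (x s j - x s i) / L)|)
        ((2*π/L^2) * (Real.cot (π*(x t j - x t i)/L) * (Fvel N L (x t) j - Fvel N L (x t) i))) t := by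
    intro i hi j hj
    simp only [Finset.mem_Icc] at hi
    simp only [Finset.mem_Ioc] at hj
    have h0 : 0 < x t j - x t i := sub_pos.mpr (hms hj.1)
    have hlt : x t j - x t i < L := by
      have h1 : x t j < x t (i + (N:ℤ)) := hms (by omega)
      rw [hper t i] at h1
      linarith
    have harg1 : 0 < π * (x t j - x t i) / L := div_pos (mul_pos Real.pi_pos h0) hL
    have harg2 : π * (x t j - x t i) / L < π := by
      rw [div_lt_iff₀ hL]
      calc π * (x t j - x t i) < π * L := by
            exact mul_lt_mul_of_pos_left hlt Real.pi_pos
        _ = π * L := rfl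
    have hsin : Real.sin (π * (x t j - x t i) / L) ≠ 0 :=
      ne_of_gt (Real.sin_pos_of_pos_of_lt_pi harg1 harg2)
    have hu : HasDerivAt (fun s => π * (x s j - x s i) / L)
        (π * (Fvel N L (x t) j - Fvel N L (x t) i) / L) t :=
      (((hode j t).sub (hode i t)).const_mul π).div_const L
    have hsinD : HasDerivAt (fun s => Real.sin (π * (x s j - x s i) / L))
        (Real.cos (π * (x t j - x t i) / L) * (π * (Fvel N L (x t) j - Fvel N L (x t) i) / L)) t :=
      (Real.hasDerivAt_sin _).comp t hu
    have hlogD : HasDerivAt (fun s => Real.log (Real.sin (π * (x s j - x s i) / L)))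
        ((Real.sin (π * (x t j - x t i) / L))⁻¹
          * (Real.cos (π * (x t j - x t i) / L)
            * (π * (Fvel N L (x t) j - Fvel N L (x t) i) / L))) t :=
      by have := (Real.hasDerivAt_log hsin).comp t hsinD; exact this
    have hfin := hlogD.const_mul (2 / L)
    simp only [Real.log_abs]
    refine hfin.congr_deriv ?_
    rw [Real.cot_eq_cos_div_sin]
    field_simp
  have hneigh : ∀ i ∈ Finset.Icc (1:ℤ) (N:ℤ),
      HasDerivAt (fun s => -Real.log ((x s (i + 1) - x s i) * (N:ℝ))
          + ((N:ℝ)⁻¹ ^ 2 / 2) / (x s (i + 1) - x s i) ^ 2)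
        ((-(1/(x t (i+1) - x t i)) - (N:ℝ)⁻¹^2/(x t (i+1) - x t i)^3)
          * (Fvel N L (x t) (i+1) - Fvel N L (x t) i)) t := by
    intro i _
    have hw : HasDerivAt (fun s => x s (i+1) - x s i)
        (Fvel N L (x t) (i+1) - Fvel N L (x t) i) t := (hode (i+1) t).sub (hode i t)
    have h0 : 0 < x t (i+1) - x t i := sub_pos.mpr (hmono t i)
    have h0ne : x t (i+1) - x t i ≠ 0 := ne_of_gt h0
    have hwn : (x t (i+1) - x t i) * (N:ℝ) ≠ 0 := ne_of_gt (mul_pos h0 hNpos)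
    have hA : HasDerivAt (fun s => Real.log ((x s (i+1) - x s i) * (N:ℝ)))
        (((x t (i+1) - x t i) * (N:ℝ))⁻¹
          * ((Fvel N L (x t) (i+1) - Fvel N L (x t) i) * (N:ℝ))) t :=
      by have := (Real.hasDerivAt_log hwn).comp t (hw.mul_const ((N:ℝ))); exact this
    have hB := (hasDerivAt_const t ((N:ℝ)⁻¹ ^ 2 / 2)).div (hw.pow 2)
      (pow_ne_zero 2 h0ne)
    have hfin := hA.neg.add hB
    refine hfin.congr_deriv ?_
    have hNne : (N:ℝ) ≠ 0 := ne_of_gt hNpos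
    simp only [Pi.pow_apply]
    field_simp
    ring
  have h1 : HasDerivAt (fun s => (N:ℝ)⁻¹ ^ 2 * ∑ i ∈ Finset.Icc (1:ℤ) (N:ℤ),
      ∑ j ∈ Finset.Ioc i (N:ℤ), (2 / L) * Real.log |Real.sin (π * (x s j - x s i) / L)|)
      ((N:ℝ)⁻¹^2 * ∑ i ∈ Finset.Icc (1:ℤ) (N:ℤ), ∑ j ∈ Finset.Ioc i (N:ℤ),
        (2*π/L^2) * (Real.cot (π*(x t j - x t i)/L)
          * (Fvel N L (x t) j - Fvel N L (x t) i))) t :=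
    (HasDerivAt.fun_sum (fun i hi => HasDerivAt.fun_sum (fun j hj => hpair i hi j hj))).const_mul _
  have h2 : HasDerivAt (fun s => (N:ℝ)⁻¹ * ∑ i ∈ Finset.Icc (1:ℤ) (N:ℤ),
      (-Real.log ((x s (i + 1) - x s i) * (N:ℝ))
        + ((N:ℝ)⁻¹ ^ 2 / 2) / (x s (i + 1) - x s i) ^ 2))
      ((N:ℝ)⁻¹ * ∑ i ∈ Finset.Icc (1:ℤ) (N:ℤ),
        ((-(1/(x t (i+1) - x t i)) - (N:ℝ)⁻¹^2/(x t (i+1) - x t i)^3)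
          * (Fvel N L (x t) (i+1) - Fvel N L (x t) i))) t :=
    (HasDerivAt.fun_sum hneigh).const_mul _
  have := h1.add h2
  simp only [energyN]
  exact this

/-- The energy identity along any `C¹` solution of the step-flow ODE system:
`(d/dt)E^N(x(t)) = −Σ_{i=1}^N (f_{i+1}−f_i)²/(x_{i+1}−x_i)`; in particular `E^N(x(t))` is
nonincreasing in `t`. -/
theorem stmt_9 (N : ℕ) (hN : 2 ≤ N) (L : ℝ) (hL : 0 < L) (x : ℝ → ℤ → ℝ)
    (hper : ∀ t : ℝ, ∀ i : ℤ, x t (i + (N:ℤ)) = x t i + L)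
    (hmono : ∀ t : ℝ, ∀ i : ℤ, x t i < x t (i + 1))
    (hode : ∀ i : ℤ, ∀ t : ℝ, HasDerivAt (fun s => x s i) (Fvel N L (x t) i) t) :
    (∀ t : ℝ, HasDerivAt (fun s => energyN N L (x s))
        (-(∑ i ∈ Finset.Icc (1:ℤ) (N:ℤ),
          (fchem N L (x t) (i + 1) - fchem N L (x t) i) ^ 2 / (x t (i + 1) - x t i))) t) ∧
    (∀ s t : ℝ, s ≤ t → energyN N L (x t) ≤ energyN N L (x s)) := by
  have hLne : L ≠ 0 := ne_of_gt hL
  have key : ∀ t : ℝ, HasDerivAt (fun s => energyN N L (x s))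
      (-(∑ i ∈ Finset.Icc (1:ℤ) (N:ℤ),
        (fchem N L (x t) (i + 1) - fchem N L (x t) i) ^ 2 / (x t (i + 1) - x t i))) t := by
    intro t
    have hD := deriv_energy N hN L hL x hper hmono hode t
    rwa [algebra_main N hN L hLne (x t) (hper t) (fun k => hmono t k)] at hD
  refine ⟨key, ?_⟩
  intro s t hst
  have hdiff : Differentiable ℝ (fun s => energyN N L (x s)) :=
    fun u => (key u).differentiableAt
  have hnonpos : ∀ u, deriv (fun s => energyN N L (x s)) u ≤ 0 := by
    intro u
    rw [(key u).deriv]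
    have hsum : 0 ≤ ∑ i ∈ Finset.Icc (1:ℤ) (N:ℤ),
        (fchem N L (x u) (i + 1) - fchem N L (x u) i) ^ 2 / (x u (i + 1) - x u i) :=
      Finset.sum_nonneg fun i _ =>
        div_nonneg (sq_nonneg _) (le_of_lt (sub_pos.mpr (hmono u i)))
    linarith
  exact antitone_of_deriv_nonpos hdiff hnonpos hst
end

section
/- Let m₁, m₂ > 0 and let φ : ℝ → ℝ be C⁶ with φ′(α) ≤ −m₁ < 0 and |φ^{(k)}(α)| ≤ m₂ for all α and 1 ≤ k ≤ 6. Then there exist a₀ > 0 and C > 0, depending only on m₁ and m₂, such that for all α ∈ ℝ and all a ∈ (0, a₀]: | 1/(φ(α−a) − φ(α)) − 1/(φ(α) − φ(α+a)) − ( −φ″(α)/φ′(α)² ) − v₂(α)·a² | ≤ C·a⁴, where v₂(α) := −φ⁗(α)/(12 φ′(α)²) + (φ″(α)/φ′(α)⁴)·( (1/3) φ′(α) φ‴(α) − (1/4) φ″(α)² ). -/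
open Real Filter Topology

/-- The second-order coefficient
`v₂ = −φ⁗/(12φ′²) + (φ″/φ′⁴)((1/3)φ′φ‴ − (1/4)φ″²)`. -/
noncomputable def v2coef (φ : ℝ → ℝ) (α : ℝ) : ℝ :=
  -(iteratedDeriv 4 φ α) / (12 * (deriv φ α) ^ 2)
    + (iteratedDeriv 2 φ α / (deriv φ α) ^ 4)
      * ((1 / 3) * deriv φ α * iteratedDeriv 3 φ α - (1 / 4) * (iteratedDeriv 2 φ α) ^ 2)

set_option linter.unusedVariables false
set_option maxHeartbeats 1000000

private lemma mbnd {x y X Y : ℝ} (hx : |x| ≤ X) (hy : |y| ≤ Y) : |x * y| ≤ X * Y := by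
  rw [abs_mul]; exact mul_le_mul hx hy (abs_nonneg _) ((abs_nonneg x).trans hx)

private lemma pbnd {x X : ℝ} (hx : |x| ≤ X) (n : ℕ) : |x ^ n| ≤ X ^ n := by
  rw [abs_pow]; exact pow_le_pow_left₀ (abs_nonneg _) hx n

private lemma mvt_le {f : ℝ → ℝ} (hd : Differentiable ℝ f) {m₁ : ℝ}
    (hder : ∀ x, deriv f x ≤ -m₁) {x y : ℝ} (hxy : x < y) :
    f y - f x ≤ -m₁ * (y - x) := by
  obtain ⟨c, _, hceq⟩ := exists_hasDerivAt_eq_slope f (deriv f) hxy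
    (hd.continuous.continuousOn) (fun z _ => (hd z).hasDerivAt)
  have h2 : (f y - f x) / (y - x) ≤ -m₁ := by rw [← hceq]; exact hder c
  have h3 : (0:ℝ) ≤ y - x := by linarith
  have hne : y - x ≠ 0 := by linarith
  calc f y - f x = (f y - f x) / (y - x) * (y - x) := (div_mul_cancel₀ _ hne).symm
    _ ≤ -m₁ * (y - x) := mul_le_mul_of_nonneg_right h2 h3

private lemma iterEq {f : ℝ → ℝ} (hf : ContDiff ℝ 6 f) {x y : ℝ} (hxy : x < y) :
    ∀ n : ℕ, n ≤ 6 → ∀ z ∈ Set.Icc x y,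
      iteratedDerivWithin n f (Set.Icc x y) z = iteratedDeriv n f z := by
  intro n
  induction n with
  | zero => intro _ z _; simp [iteratedDerivWithin_zero, iteratedDeriv_zero]
  | succ n ih =>
    intro hn z hz
    have hu := uniqueDiffOn_Icc hxy
    rw [iteratedDerivWithin_succ, iteratedDeriv_succ]
    have h1 : derivWithin (iteratedDerivWithin n f (Set.Icc x y)) (Set.Icc x y) z
        = derivWithin (iteratedDeriv n f) (Set.Icc x y) z :=
      derivWithin_congr (fun w hw => ih (by omega) w hw) (ih (by omega) z hz)
    rw [h1]
    have hdiff : DifferentiableAt ℝ (iteratedDeriv n f) z := by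
      have hlt : (n : WithTop ℕ∞) < 6 := by exact_mod_cast (by omega : n < 6)
      exact (hf.differentiable_iteratedDeriv n hlt).differentiableAt
    exact hdiff.derivWithin (hu z hz)

private lemma taylor6 {m₂ : ℝ} {f : ℝ → ℝ} (hf : ContDiff ℝ 6 f)
    (hb : ∀ y, |iteratedDeriv 6 f y| ≤ m₂) (x h : ℝ) (hh : 0 < h) :
    |f (x + h) - (f x + iteratedDeriv 1 f x * h + iteratedDeriv 2 f x * h ^ 2 / 2
      + iteratedDeriv 3 f x * h ^ 3 / 6 + iteratedDeriv 4 f x * h ^ 4 / 24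
      + iteratedDeriv 5 f x * h ^ 5 / 120)| ≤ m₂ * h ^ 6 / 120 := by
  have hxy : x < x + h := by linarith
  have hcd : ContDiffOn ℝ ((5:ℕ) + 1) f (Set.Icc x (x + h)) :=
    (hf.of_le (by norm_num)).contDiffOn
  have hxm : x ∈ Set.Icc x (x + h) := Set.left_mem_Icc.mpr hxy.le
  have hC : ∀ y ∈ Set.Icc x (x + h),
      ‖iteratedDerivWithin ((5:ℕ)+1) f (Set.Icc x (x + h)) y‖ ≤ m₂ := by
    intro y hy
    rw [Real.norm_eq_abs]
    rw [show ((5:ℕ)+1) = 6 from rfl, iterEq hf hxy 6 le_rfl y hy]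
    exact hb y
  have H := taylor_mean_remainder_bound (n := 5) hxy.le hcd
    (Set.right_mem_Icc.mpr hxy.le) hC
  rw [taylor_within_apply] at H
  simp only [Finset.sum_range_succ, Finset.sum_range_zero,
    iterEq hf hxy 0 (by norm_num) x hxm, iterEq hf hxy 1 (by norm_num) x hxm,
    iterEq hf hxy 2 (by norm_num) x hxm, iterEq hf hxy 3 (by norm_num) x hxm,
    iterEq hf hxy 4 (by norm_num) x hxm, iterEq hf hxy 5 (by norm_num) x hxm,
    smul_eq_mul, Real.norm_eq_abs] at H
  have hstep : x + h - x = h := by ring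
  rw [hstep] at H
  norm_num [Nat.factorial] at H
  simp only [iteratedDeriv_one]
  have hEq : f (x + h) - (f x + deriv f x * h + iteratedDeriv 2 f x * h ^ 2 / 2
      + iteratedDeriv 3 f x * h ^ 3 / 6 + iteratedDeriv 4 f x * h ^ 4 / 24
      + iteratedDeriv 5 f x * h ^ 5 / 120)
      = f (x + h) - (f x + h * deriv f x + 1 / 2 * h ^ 2 * iteratedDeriv 2 f x
        + 1 / 6 * h ^ 3 * iteratedDeriv 3 f x + 1 / 24 * h ^ 4 * iteratedDeriv 4 f x
        + 1 / 120 * h ^ 5 * iteratedDeriv 5 f x) := by ring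
  rw [hEq]
  exact H

private lemma powmono {m : ℝ} (hm : 1 ≤ m) {i j : ℕ} (h : i ≤ j) : m ^ i ≤ m ^ j :=
  pow_le_pow_right₀ hm h

set_option maxHeartbeats 1000000 in
private lemma qbound (m p q r s t a : ℝ) (hm1 : 1 ≤ m)
    (hbp : |p| ≤ m) (hbq : |q| ≤ m) (hbr : |r| ≤ m) (hbs : |s| ≤ m) (hbt : |t| ≤ m)
    (hba : |a| ≤ m) :
    |(1/16 : ℝ) * (q ^ 5) + (-1/6 : ℝ) * (p * q ^ 3 * r) + (1/12 : ℝ) * (p ^ 2 * q * r ^ 2) + (1/16 : ℝ) * (p ^ 2 * q ^ 2 * s) + (-1/36 : ℝ) * (p ^ 3 * r * s) + (-1/60 : ℝ) * (p ^ 3 * q * t) + (-1/144 : ℝ) * (q ^ 3 * r ^ 2 * a ^ 2) + (1/96 : ℝ) * (q ^ 4 * s * a ^ 2) + (1/108 : ℝ) * (p * q * r ^ 3 * a ^ 2) + (-1/72 : ℝ) * (p * q ^ 2 * r * s * a ^ 2) + (-1/240 : ℝ) * (p * q ^ 3 * t * a ^ 2) + (-1/432 : ℝ) * (p ^ 2 *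 r ^ 2 * s * a ^ 2) + (1/192 : ℝ) * (p ^ 2 * q * s ^ 2 * a ^ 2) + (1/360 : ℝ) * (p ^ 2 * q * r * t * a ^ 2) + (-1/720 : ℝ) * (p ^ 3 * s * t * a ^ 2) + (1/2304 : ℝ) * (q ^ 3 * s ^ 2 * a ^ 4) + (-1/1440 : ℝ) * (q ^ 3 * r * t * a ^ 4) + (-1/1728 : ℝ) * (p * q * r * s ^ 2 * a ^ 4) + (1/1080 : ℝ) * (p * q * r ^ 2 * t * a ^ 4) + (1/6912 : ℝ) * (p ^ 2 * s ^ 3 * a ^ 4) + (-1/4320 : ℝ) * (p ^ 2 * r * s * t * a ^ 4) + (-1/14400 : ℝ) * (p ^ 2 * q * t ^ 2 * a ^ 4) + (-1/57600 : ℝ) * (q ^ 3 * t ^ 2 * a ^ 6) + (1/43200 : ℝ) * (p * q * r * t ^ 2 * a ^ 6) + (-1/172800 : ℝ) * (p ^ 2 * s * t ^ 2 * a ^ 6)| ≤ m ^ 11 := by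
  have hQ1 : |(1/16 : ℝ) * (q ^ 5)| ≤ (1/16 : ℝ) * m ^ 11 :=
    mbnd (le_of_eq (by norm_num)) (Trans.trans (pbnd hbq 5) (Trans.trans (le_of_eq (by ring : m ^ 5 = m ^ 5)) (powmono hm1 (by norm_num : 5 ≤ 11))))
  have hQ2 : |(-1/6 : ℝ) * (p * q ^ 3 * r)| ≤ (1/6 : ℝ) * m ^ 11 :=
    mbnd (le_of_eq (by norm_num)) (Trans.trans (mbnd (mbnd hbp (pbnd hbq 3)) hbr) (Trans.trans (le_of_eq (by ring : m * m ^ 3 * m = m ^ 5)) (powmono hm1 (by norm_num : 5 ≤ 11))))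
  have hQ3 : |(1/12 : ℝ) * (p ^ 2 * q * r ^ 2)| ≤ (1/12 : ℝ) * m ^ 11 :=
    mbnd (le_of_eq (by norm_num)) (Trans.trans (mbnd (mbnd (pbnd hbp 2) hbq) (pbnd hbr 2)) (Trans.trans (le_of_eq (by ring : m ^ 2 * m * m ^ 2 = m ^ 5)) (powmono hm1 (by norm_num : 5 ≤ 11))))
  have hQ4 : |(1/16 : ℝ) * (p ^ 2 * q ^ 2 * s)| ≤ (1/16 : ℝ) * m ^ 11 :=
    mbnd (le_of_eq (by norm_num)) (Trans.trans (mbnd (mbnd (pbnd hbp 2) (pbnd hbq 2)) hbs) (Trans.trans (le_of_eq (by ring : m ^ 2 * m ^ 2 * m = m ^ 5)) (powmono hm1 (by norm_num : 5 ≤ 11))))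
  have hQ5 : |(-1/36 : ℝ) * (p ^ 3 * r * s)| ≤ (1/36 : ℝ) * m ^ 11 :=
    mbnd (le_of_eq (by norm_num)) (Trans.trans (mbnd (mbnd (pbnd hbp 3) hbr) hbs) (Trans.trans (le_of_eq (by ring : m ^ 3 * m * m = m ^ 5)) (powmono hm1 (by norm_num : 5 ≤ 11))))
  have hQ6 : |(-1/60 : ℝ) * (p ^ 3 * q * t)| ≤ (1/60 : ℝ) * m ^ 11 :=
    mbnd (le_of_eq (by norm_num)) (Trans.trans (mbnd (mbnd (pbnd hbp 3) hbq) hbt) (Trans.trans (le_of_eq (by ring : m ^ 3 * m * m = m ^ 5)) (powmono hm1 (by norm_num : 5 ≤ 11))))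
  have hQ7 : |(-1/144 : ℝ) * (q ^ 3 * r ^ 2 * a ^ 2)| ≤ (1/144 : ℝ) * m ^ 11 :=
    mbnd (le_of_eq (by norm_num)) (Trans.trans (mbnd (mbnd (pbnd hbq 3) (pbnd hbr 2)) (pbnd hba 2)) (Trans.trans (le_of_eq (by ring : m ^ 3 * m ^ 2 * m ^ 2 = m ^ 7)) (powmono hm1 (by norm_num : 7 ≤ 11))))
  have hQ8 : |(1/96 : ℝ) * (q ^ 4 * s * a ^ 2)| ≤ (1/96 : ℝ) * m ^ 11 :=
    mbnd (le_of_eq (by norm_num)) (Trans.trans (mbnd (mbnd (pbnd hbq 4) hbs) (pbnd hba 2)) (Trans.trans (le_of_eq (by ring : m ^ 4 * m * m ^ 2 = m ^ 7)) (powmono hm1 (by norm_num : 7 ≤ 11))))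
  have hQ9 : |(1/108 : ℝ) * (p * q * r ^ 3 * a ^ 2)| ≤ (1/108 : ℝ) * m ^ 11 :=
    mbnd (le_of_eq (by norm_num)) (Trans.trans (mbnd (mbnd (mbnd hbp hbq) (pbnd hbr 3)) (pbnd hba 2)) (Trans.trans (le_of_eq (by ring : m * m * m ^ 3 * m ^ 2 = m ^ 7)) (powmono hm1 (by norm_num : 7 ≤ 11))))
  have hQ10 : |(-1/72 : ℝ) * (p * q ^ 2 * r * s * a ^ 2)| ≤ (1/72 : ℝ) * m ^ 11 :=
    mbnd (le_of_eq (by norm_num)) (Trans.trans (mbnd (mbnd (mbnd (mbnd hbp (pbnd hbq 2)) hbr) hbs) (pbnd hba 2)) (Trans.trans (le_of_eq (by ring : m * m ^ 2 * m * m * m ^ 2 = m ^ 7)) (powmono hm1 (by norm_num : 7 ≤ 11))))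
  have hQ11 : |(-1/240 : ℝ) * (p * q ^ 3 * t * a ^ 2)| ≤ (1/240 : ℝ) * m ^ 11 :=
    mbnd (le_of_eq (by norm_num)) (Trans.trans (mbnd (mbnd (mbnd hbp (pbnd hbq 3)) hbt) (pbnd hba 2)) (Trans.trans (le_of_eq (by ring : m * m ^ 3 * m * m ^ 2 = m ^ 7)) (powmono hm1 (by norm_num : 7 ≤ 11))))
  have hQ12 : |(-1/432 : ℝ) * (p ^ 2 * r ^ 2 * s * a ^ 2)| ≤ (1/432 : ℝ) * m ^ 11 :=
    mbnd (le_of_eq (by norm_num)) (Trans.trans (mbnd (mbnd (mbnd (pbnd hbp 2) (pbnd hbr 2)) hbs) (pbnd hba 2)) (Trans.trans (le_of_eq (by ring : m ^ 2 * m ^ 2 * m * m ^ 2 = m ^ 7)) (powmono hm1 (by norm_num : 7 ≤ 11))))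
  have hQ13 : |(1/192 : ℝ) * (p ^ 2 * q * s ^ 2 * a ^ 2)| ≤ (1/192 : ℝ) * m ^ 11 :=
    mbnd (le_of_eq (by norm_num)) (Trans.trans (mbnd (mbnd (mbnd (pbnd hbp 2) hbq) (pbnd hbs 2)) (pbnd hba 2)) (Trans.trans (le_of_eq (by ring : m ^ 2 * m * m ^ 2 * m ^ 2 = m ^ 7)) (powmono hm1 (by norm_num : 7 ≤ 11))))
  have hQ14 : |(1/360 : ℝ) * (p ^ 2 * q * r * t * a ^ 2)| ≤ (1/360 : ℝ) * m ^ 11 :=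
    mbnd (le_of_eq (by norm_num)) (Trans.trans (mbnd (mbnd (mbnd (mbnd (pbnd hbp 2) hbq) hbr) hbt) (pbnd hba 2)) (Trans.trans (le_of_eq (by ring : m ^ 2 * m * m * m * m ^ 2 = m ^ 7)) (powmono hm1 (by norm_num : 7 ≤ 11))))
  have hQ15 : |(-1/720 : ℝ) * (p ^ 3 * s * t * a ^ 2)| ≤ (1/720 : ℝ) * m ^ 11 :=
    mbnd (le_of_eq (by norm_num)) (Trans.trans (mbnd (mbnd (mbnd (pbnd hbp 3) hbs) hbt) (pbnd hba 2)) (Trans.trans (le_of_eq (by ring : m ^ 3 * m * m * m ^ 2 = m ^ 7)) (powmono hm1 (by norm_num : 7 ≤ 11))))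
  have hQ16 : |(1/2304 : ℝ) * (q ^ 3 * s ^ 2 * a ^ 4)| ≤ (1/2304 : ℝ) * m ^ 11 :=
    mbnd (le_of_eq (by norm_num)) (Trans.trans (mbnd (mbnd (pbnd hbq 3) (pbnd hbs 2)) (pbnd hba 4)) (Trans.trans (le_of_eq (by ring : m ^ 3 * m ^ 2 * m ^ 4 = m ^ 9)) (powmono hm1 (by norm_num : 9 ≤ 11))))
  have hQ17 : |(-1/1440 : ℝ) * (q ^ 3 * r * t * a ^ 4)| ≤ (1/1440 : ℝ) * m ^ 11 :=
    mbnd (le_of_eq (by norm_num)) (Trans.trans (mbnd (mbnd (mbnd (pbnd hbq 3) hbr) hbt) (pbnd hba 4)) (Trans.trans (le_of_eq (by ring : m ^ 3 * m * m * m ^ 4 = m ^ 9)) (powmono hm1 (by norm_num : 9 ≤ 11))))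
  have hQ18 : |(-1/1728 : ℝ) * (p * q * r * s ^ 2 * a ^ 4)| ≤ (1/1728 : ℝ) * m ^ 11 :=
    mbnd (le_of_eq (by norm_num)) (Trans.trans (mbnd (mbnd (mbnd (mbnd hbp hbq) hbr) (pbnd hbs 2)) (pbnd hba 4)) (Trans.trans (le_of_eq (by ring : m * m * m * m ^ 2 * m ^ 4 = m ^ 9)) (powmono hm1 (by norm_num : 9 ≤ 11))))
  have hQ19 : |(1/1080 : ℝ) * (p * q * r ^ 2 * t * a ^ 4)| ≤ (1/1080 : ℝ) * m ^ 11 :=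
    mbnd (le_of_eq (by norm_num)) (Trans.trans (mbnd (mbnd (mbnd (mbnd hbp hbq) (pbnd hbr 2)) hbt) (pbnd hba 4)) (Trans.trans (le_of_eq (by ring : m * m * m ^ 2 * m * m ^ 4 = m ^ 9)) (powmono hm1 (by norm_num : 9 ≤ 11))))
  have hQ20 : |(1/6912 : ℝ) * (p ^ 2 * s ^ 3 * a ^ 4)| ≤ (1/6912 : ℝ) * m ^ 11 :=
    mbnd (le_of_eq (by norm_num)) (Trans.trans (mbnd (mbnd (pbnd hbp 2) (pbnd hbs 3)) (pbnd hba 4)) (Trans.trans (le_of_eq (by ring : m ^ 2 * m ^ 3 * m ^ 4 = m ^ 9)) (powmono hm1 (by norm_num : 9 ≤ 11))))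
  have hQ21 : |(-1/4320 : ℝ) * (p ^ 2 * r * s * t * a ^ 4)| ≤ (1/4320 : ℝ) * m ^ 11 :=
    mbnd (le_of_eq (by norm_num)) (Trans.trans (mbnd (mbnd (mbnd (mbnd (pbnd hbp 2) hbr) hbs) hbt) (pbnd hba 4)) (Trans.trans (le_of_eq (by ring : m ^ 2 * m * m * m * m ^ 4 = m ^ 9)) (powmono hm1 (by norm_num : 9 ≤ 11))))
  have hQ22 : |(-1/14400 : ℝ) * (p ^ 2 * q * t ^ 2 * a ^ 4)| ≤ (1/14400 : ℝ) * m ^ 11 :=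
    mbnd (le_of_eq (by norm_num)) (Trans.trans (mbnd (mbnd (mbnd (pbnd hbp 2) hbq) (pbnd hbt 2)) (pbnd hba 4)) (Trans.trans (le_of_eq (by ring : m ^ 2 * m * m ^ 2 * m ^ 4 = m ^ 9)) (powmono hm1 (by norm_num : 9 ≤ 11))))
  have hQ23 : |(-1/57600 : ℝ) * (q ^ 3 * t ^ 2 * a ^ 6)| ≤ (1/57600 : ℝ) * m ^ 11 :=
    mbnd (le_of_eq (by norm_num)) (Trans.trans (mbnd (mbnd (pbnd hbq 3) (pbnd hbt 2)) (pbnd hba 6)) (Trans.trans (le_of_eq (by ring : m ^ 3 * m ^ 2 * m ^ 6 = m ^ 11)) (powmono hm1 (by norm_num : 11 ≤ 11))))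
  have hQ24 : |(1/43200 : ℝ) * (p * q * r * t ^ 2 * a ^ 6)| ≤ (1/43200 : ℝ) * m ^ 11 :=
    mbnd (le_of_eq (by norm_num)) (Trans.trans (mbnd (mbnd (mbnd (mbnd hbp hbq) hbr) (pbnd hbt 2)) (pbnd hba 6)) (Trans.trans (le_of_eq (by ring : m * m * m * m ^ 2 * m ^ 6 = m ^ 11)) (powmono hm1 (by norm_num : 11 ≤ 11))))
  have hQ25 : |(-1/172800 : ℝ) * (p ^ 2 * s * t ^ 2 * a ^ 6)| ≤ (1/172800 : ℝ) * m ^ 11 :=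
    mbnd (le_of_eq (by norm_num)) (Trans.trans (mbnd (mbnd (mbnd (pbnd hbp 2) hbs) (pbnd hbt 2)) (pbnd hba 6)) (Trans.trans (le_of_eq (by ring : m ^ 2 * m * m ^ 2 * m ^ 6 = m ^ 11)) (powmono hm1 (by norm_num : 11 ≤ 11))))


  have h0 : (0:ℝ) ≤ m ^ 11 := by positivity
  rw [abs_le]
  constructor <;> linarith [(abs_le.mp hQ1).1, (abs_le.mp hQ1).2, (abs_le.mp hQ2).1, (abs_le.mp hQ2).2, (abs_le.mp hQ3).1, (abs_le.mp hQ3).2, (abs_le.mp hQ4).1, (abs_le.mp hQ4).2, (abs_le.mp hQ5).1, (abs_le.mp hQ5).2, (abs_le.mp hQ6).1, (abs_le.mp hQ6).2, (abs_le.mp hQ7).1, (abs_le.mp hQ7).2, (abs_le.mp hQ8).1, (abs_le.mp hQ8).2, (abs_le.mp hQ9).1, (abs_le.mp hQ9).2, (abs_le.mp hQ10).1, (abs_le.mp hQ10).2, (abs_le.mp hQ11).1, (abs_le.mp hQ11).2, (abs_le.mp hQ12).1, (abs_le.mp hQ12).2, (abs_le.mp hQ13).1, (abs_le.mp hQ13).2,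 (abs_le.mp hQ14).1, (abs_le.mp hQ14).2, (abs_le.mp hQ15).1, (abs_le.mp hQ15).2, (abs_le.mp hQ16).1, (abs_le.mp hQ16).2, (abs_le.mp hQ17).1, (abs_le.mp hQ17).2, (abs_le.mp hQ18).1, (abs_le.mp hQ18).2, (abs_le.mp hQ19).1, (abs_le.mp hQ19).2, (abs_le.mp hQ20).1, (abs_le.mp hQ20).2, (abs_le.mp hQ21).1, (abs_le.mp hQ21).2, (abs_le.mp hQ22).1, (abs_le.mp hQ22).2, (abs_le.mp hQ23).1, (abs_le.mp hQ23).2, (abs_le.mp hQ24).1, (abs_le.mp hQ24).2, (abs_le.mp hQ25).1, (abs_le.mp hQ25).2]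

set_option maxHeartbeats 1000000 in
private lemma pmbound (m p q r s t a : ℝ) (hm1 : 1 ≤ m)
    (hbp : |p| ≤ m) (hbq : |q| ≤ m) (hbr : |r| ≤ m) (hbs : |s| ≤ m) (hbt : |t| ≤ m)
    (hba : |a| ≤ m) :
    |(-1 : ℝ) * (p ^ 2 * q) + (-1/4 : ℝ) * (q ^ 3 * a ^ 2) + (1/3 : ℝ) * (p * q * r * a ^ 2) + (-1/12 : ℝ) * (p ^ 2 * s * a ^ 2)| ≤ 2 * m ^ 7 := by
  have hP1 : |(-1 : ℝ) * (p ^ 2 * q)| ≤ (1 : ℝ) * m ^ 7 :=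
    mbnd (le_of_eq (by norm_num)) (Trans.trans (mbnd (pbnd hbp 2) hbq) (Trans.trans (le_of_eq (by ring : m ^ 2 * m = m ^ 3)) (powmono hm1 (by norm_num : 3 ≤ 7))))
  have hP2 : |(-1/4 : ℝ) * (q ^ 3 * a ^ 2)| ≤ (1/4 : ℝ) * m ^ 7 :=
    mbnd (le_of_eq (by norm_num)) (Trans.trans (mbnd (pbnd hbq 3) (pbnd hba 2)) (Trans.trans (le_of_eq (by ring : m ^ 3 * m ^ 2 = m ^ 5)) (powmono hm1 (by norm_num : 5 ≤ 7))))
  have hP3 : |(1/3 : ℝ) * (p * q * r * a ^ 2)| ≤ (1/3 : ℝ) * m ^ 7 :=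
    mbnd (le_of_eq (by norm_num)) (Trans.trans (mbnd (mbnd (mbnd hbp hbq) hbr) (pbnd hba 2)) (Trans.trans (le_of_eq (by ring : m * m * m * m ^ 2 = m ^ 5)) (powmono hm1 (by norm_num : 5 ≤ 7))))
  have hP4 : |(-1/12 : ℝ) * (p ^ 2 * s * a ^ 2)| ≤ (1/12 : ℝ) * m ^ 7 :=
    mbnd (le_of_eq (by norm_num)) (Trans.trans (mbnd (mbnd (pbnd hbp 2) hbs) (pbnd hba 2)) (Trans.trans (le_of_eq (by ring : m ^ 2 * m * m ^ 2 = m ^ 5)) (powmono hm1 (by norm_num : 5 ≤ 7))))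
  have h0 : (0:ℝ) ≤ m ^ 7 := by positivity
  rw [abs_le]
  constructor <;> linarith [(abs_le.mp hP1).1, (abs_le.mp hP1).2, (abs_le.mp hP2).1, (abs_le.mp hP2).2, (abs_le.mp hP3).1, (abs_le.mp hP3).2, (abs_le.mp hP4).1, (abs_le.mp hP4).2]

set_option maxHeartbeats 2000000 in
private lemma core (m₁ m a p q r s t dm dp : ℝ)
    (hm1 : 1 ≤ m) (hm₁ : 0 < m₁)
    (ha : 0 < a) (ha1 : a ≤ 1)
    (hbp : |p| ≤ m) (hbq : |q| ≤ m) (hbr : |r| ≤ m) (hbs : |s| ≤ m) (hbt : |t| ≤ m)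
    (hpm : m₁ ≤ -p)
    (hdp : dp ≤ -(m₁ * a)) (hdm : m₁ * a ≤ dm)
    (hep0 : |dp - (p * a + r * a ^ 3 / 6 + t * a ^ 5 / 120 + (q * a ^ 2 / 2 + s * a ^ 4 / 24))| ≤ m * a ^ 6)
    (hem0 : |dm - (-(p * a + r * a ^ 3 / 6 + t * a ^ 5 / 120) + (q * a ^ 2 / 2 + s * a ^ 4 / 24))| ≤ m * a ^ 6) :
    |1 / dm + 1 / dp - (-q / p ^ 2
        + (-s / (12 * p ^ 2) + q / p ^ 4 * (1 / 3 * p * r - 1 / 4 * q ^ 2)) * a ^ 2)|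
      ≤ ((m ^ 11 / m₁ ^ 4 + 2 * m + 14 * m ^ 14 / m₁ ^ 4) / m₁ ^ 2) * a ^ 4 := by
  have hm0 : (0:ℝ) < m := lt_of_lt_of_le one_pos hm1
  have hpneg : p < 0 := by nlinarith
  have hp0 : p ≠ 0 := ne_of_lt hpneg
  have hba : |a| ≤ m := by rw [abs_of_pos ha]; linarith
  obtain ⟨A, hA⟩ : ∃ A : ℝ, A = p * a + r * a ^ 3 / 6 + t * a ^ 5 / 120 := ⟨_, rfl⟩
  obtain ⟨B, hB⟩ : ∃ B : ℝ, B = q * a ^ 2 / 2 + s * a ^ 4 / 24 := ⟨_, rfl⟩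
  obtain ⟨ep, hEp⟩ : ∃ e : ℝ, e = dp - (A + B) := ⟨_, rfl⟩
  obtain ⟨em, hEm⟩ : ∃ e : ℝ, e = dm - (-A + B) := ⟨_, rfl⟩
  obtain ⟨Mv, hMv⟩ : ∃ M : ℝ, M = -q / p ^ 2
      + (-s / (12 * p ^ 2) + q / p ^ 4 * (1 / 3 * p * r - 1 / 4 * q ^ 2)) * a ^ 2 := ⟨_, rfl⟩
  have hepb : |ep| ≤ m * a ^ 6 := by rw [hEp, hA, hB]; exact hep0
  have hemb : |em| ≤ m * a ^ 6 := by rw [hEm, hA, hB]; exact hem0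
  have hQB : |(1/16 : ℝ) * (q ^ 5) + (-1/6 : ℝ) * (p * q ^ 3 * r) + (1/12 : ℝ) * (p ^ 2 * q * r ^ 2) + (1/16 : ℝ) * (p ^ 2 * q ^ 2 * s) + (-1/36 : ℝ) * (p ^ 3 * r * s) + (-1/60 : ℝ) * (p ^ 3 * q * t) + (-1/144 : ℝ) * (q ^ 3 * r ^ 2 * a ^ 2) + (1/96 : ℝ) * (q ^ 4 * s * a ^ 2) + (1/108 : ℝ) * (p * q * r ^ 3 * a ^ 2) + (-1/72 : ℝ) * (p * q ^ 2 * r * s * a ^ 2) + (-1/240 : ℝ) * (p * q ^ 3 * t * a ^ 2) + (-1/432 : ℝ) * (p ^ 2 * r ^ 2 * s * a ^ 2) + (1/192 : ℝ) * (p ^ 2 * q * s ^ 2 * a ^ 2) + (1/360 : ℝ) * (p ^ 2 * q * r * t * a ^ 2) + (-1/720 : ℝ) * (p ^ 3 * s * t * a ^ 2) + (1/2304 : ℝ) * (q ^ 3 * s ^ 2 * a ^ 4) + (-1/1440 : ℝ) * (q ^ 3 * r * t * a ^ 4) + (-1/1728 : ℝ) * (p * q * r * s ^ 2 * a ^ 4)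 + (1/1080 : ℝ) * (p * q * r ^ 2 * t * a ^ 4) + (1/6912 : ℝ) * (p ^ 2 * s ^ 3 * a ^ 4) + (-1/4320 : ℝ) * (p ^ 2 * r * s * t * a ^ 4) + (-1/14400 : ℝ) * (p ^ 2 * q * t ^ 2 * a ^ 4) + (-1/57600 : ℝ) * (q ^ 3 * t ^ 2 * a ^ 6) + (1/43200 : ℝ) * (p * q * r * t ^ 2 * a ^ 6) + (-1/172800 : ℝ) * (p ^ 2 * s * t ^ 2 * a ^ 6)| ≤ m ^ 11 := qbound m p q r s t a hm1 hbp hbq hbr hbs hbt hba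
  have hPB : |(-1 : ℝ) * (p ^ 2 * q) + (-1/4 : ℝ) * (q ^ 3 * a ^ 2) + (1/3 : ℝ) * (p * q * r * a ^ 2) + (-1/12 : ℝ) * (p ^ 2 * s * a ^ 2)| ≤ 2 * m ^ 7 := pmbound m p q r s t a hm1 hbp hbq hbr hbs hbt hba
  -- identity p^4 * R = a^6 * Q
  have hQident : p ^ 4 * (2 * B - Mv * (B ^ 2 - A ^ 2)) = a ^ 6 * ((1/16 : ℝ) * (q ^ 5) + (-1/6 : ℝ) * (p * q ^ 3 * r) + (1/12 : ℝ) * (p ^ 2 * q * r ^ 2) + (1/16 : ℝ) * (p ^ 2 * q ^ 2 * s) + (-1/36 : ℝ) * (p ^ 3 * r * s) + (-1/60 : ℝ) * (p ^ 3 * q * t) + (-1/144 : ℝ) * (q ^ 3 * r ^ 2 * a ^ 2) + (1/96 : ℝ) * (q ^ 4 * s * a ^ 2) + (1/108 : ℝ) * (p * q * r ^ 3 * a ^ 2) + (-1/72 : ℝ) * (p * q ^ 2 * r * s * a ^ 2) + (-1/240 : ℝ) * (p * q ^ 3 * t * a ^ 2) + (-1/432 : ℝ) * (p ^ 2 * r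 ^ 2 * s * a ^ 2) + (1/192 : ℝ) * (p ^ 2 * q * s ^ 2 * a ^ 2) + (1/360 : ℝ) * (p ^ 2 * q * r * t * a ^ 2) + (-1/720 : ℝ) * (p ^ 3 * s * t * a ^ 2) + (1/2304 : ℝ) * (q ^ 3 * s ^ 2 * a ^ 4) + (-1/1440 : ℝ) * (q ^ 3 * r * t * a ^ 4) + (-1/1728 : ℝ) * (p * q * r * s ^ 2 * a ^ 4) + (1/1080 : ℝ) * (p * q * r ^ 2 * t * a ^ 4) + (1/6912 : ℝ) * (p ^ 2 * s ^ 3 * a ^ 4) + (-1/4320 : ℝ) * (p ^ 2 * r * s * t * a ^ 4) + (-1/14400 : ℝ) * (p ^ 2 * q * t ^ 2 * a ^ 4) + (-1/57600 : ℝ) * (q ^ 3 * t ^ 2 * a ^ 6) + (1/43200 : ℝ) * (p * q * r * t ^ 2 * a ^ 6) + (-1/172800 : ℝ) * (p ^ 2 * s * t ^ 2 * a ^ 6)) := by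
    rw [hMv, hA, hB]; field_simp; ring
  have hMident : p ^ 4 * Mv = (-1 : ℝ) * (p ^ 2 * q) + (-1/4 : ℝ) * (q ^ 3 * a ^ 2) + (1/3 : ℝ) * (p * q * r * a ^ 2) + (-1/12 : ℝ) * (p ^ 2 * s * a ^ 2) := by
    rw [hMv]; field_simp; ring
  have hp4 : (0:ℝ) < p ^ 4 := by positivity
  have hp4m : m₁ ^ 4 ≤ p ^ 4 := by
    calc m₁ ^ 4 ≤ (-p) ^ 4 := pow_le_pow_left₀ hm₁.le hpm 4
      _ = p ^ 4 := by ring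
  -- |R| ≤ a^6 m^11 / m₁^4
  have hR : |2 * B - Mv * (B ^ 2 - A ^ 2)| ≤ a ^ 6 * m ^ 11 / m₁ ^ 4 := by
    have h3 : p ^ 4 * |2 * B - Mv * (B ^ 2 - A ^ 2)| ≤ a ^ 6 * m ^ 11 := by
      rw [← abs_of_pos hp4, ← abs_mul, hQident, abs_mul, abs_of_pos (by positivity : (0:ℝ) < a ^ 6)]
      exact mul_le_mul_of_nonneg_left hQB (by positivity)
    rw [le_div_iff₀ (by positivity : (0:ℝ) < m₁ ^ 4)]
    calc |2 * B - Mv * (B ^ 2 - A ^ 2)| * m₁ ^ 4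
        ≤ |2 * B - Mv * (B ^ 2 - A ^ 2)| * p ^ 4 := by
          exact mul_le_mul_of_nonneg_left hp4m (abs_nonneg _)
      _ = p ^ 4 * |2 * B - Mv * (B ^ 2 - A ^ 2)| := by ring
      _ ≤ a ^ 6 * m ^ 11 := h3
  -- |Mv| ≤ 2 m^7 / m₁^4
  have hMb : |Mv| ≤ 2 * m ^ 7 / m₁ ^ 4 := by
    have h3 : p ^ 4 * |Mv| ≤ 2 * m ^ 7 := by
      rw [← abs_of_pos hp4, ← abs_mul, hMident]; exact hPB
    rw [le_div_iff₀ (by positivity : (0:ℝ) < m₁ ^ 4)]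
    calc |Mv| * m₁ ^ 4 ≤ |Mv| * p ^ 4 := mul_le_mul_of_nonneg_left hp4m (abs_nonneg _)
      _ = p ^ 4 * |Mv| := by ring
      _ ≤ 2 * m ^ 7 := h3
  -- |A| ≤ 2 m^6, |B| ≤ m^6
  have ha6 : ∀ k : ℕ, k ≤ 11 → |a ^ k| ≤ m ^ k := fun k _ => pbnd hba k
  clear hQB hPB hQident hMident
  have habsdiv : ∀ x c : ℝ, 0 < c → |x / c| = |x| / c := by
    intro x c hc; rw [abs_div, abs_of_pos hc]
  have hAb : |A| ≤ 2 * m ^ 6 := by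
    rw [hA]
    have h1 : |p * a| ≤ m ^ 2 := by
      calc |p * a| ≤ m * m := mbnd hbp hba
        _ = m ^ 2 := by ring
    have h2 : |r * a ^ 3 / 6| ≤ m ^ 4 / 6 := by
      rw [habsdiv _ _ (by norm_num : (0:ℝ) < 6)]
      have h := mbnd hbr (pbnd hba 3)
      calc |r * a ^ 3| / 6 ≤ m * m ^ 3 / 6 := by linarith
        _ = m ^ 4 / 6 := by ring
    have h3 : |t * a ^ 5 / 120| ≤ m ^ 6 / 120 := by
      rw [habsdiv _ _ (by norm_num : (0:ℝ) < 120)]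
      have h := mbnd hbt (pbnd hba 5)
      calc |t * a ^ 5| / 120 ≤ m * m ^ 5 / 120 := by linarith
        _ = m ^ 6 / 120 := by ring
    have e1 : m ^ 2 ≤ m ^ 6 := powmono hm1 (by norm_num)
    have e2 : m ^ 4 ≤ m ^ 6 := powmono hm1 (by norm_num)
    have h0 : (0:ℝ) ≤ m ^ 6 := by positivity
    calc |p * a + r * a ^ 3 / 6 + t * a ^ 5 / 120|
        ≤ |p * a + r * a ^ 3 / 6| + |t * a ^ 5 / 120| := abs_add_le _ _
      _ ≤ (|p * a| + |r * a ^ 3 / 6|) + |t * a ^ 5 / 120| :=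
          add_le_add (abs_add_le _ _) (le_refl _)
      _ ≤ 2 * m ^ 6 := by linarith
  have hBb : |B| ≤ m ^ 6 := by
    rw [hB]
    have h1 : |q * a ^ 2 / 2| ≤ m ^ 3 / 2 := by
      rw [habsdiv _ _ (by norm_num : (0:ℝ) < 2)]
      have h := mbnd hbq (pbnd hba 2)
      calc |q * a ^ 2| / 2 ≤ m * m ^ 2 / 2 := by linarith
        _ = m ^ 3 / 2 := by ring
    have h2 : |s * a ^ 4 / 24| ≤ m ^ 5 / 24 := by
      rw [habsdiv _ _ (by norm_num : (0:ℝ) < 24)]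
      have h := mbnd hbs (pbnd hba 4)
      calc |s * a ^ 4| / 24 ≤ m * m ^ 4 / 24 := by linarith
        _ = m ^ 5 / 24 := by ring
    have e1 : m ^ 3 ≤ m ^ 6 := powmono hm1 (by norm_num)
    have e2 : m ^ 5 ≤ m ^ 6 := powmono hm1 (by norm_num)
    have h0 : (0:ℝ) ≤ m ^ 6 := by positivity
    calc |q * a ^ 2 / 2 + s * a ^ 4 / 24| ≤ |q * a ^ 2 / 2| + |s * a ^ 4 / 24| := abs_add_le _ _
      _ ≤ m ^ 6 := by linarith
  have hABb : |A + B| ≤ 3 * m ^ 6 := (abs_add_le A B).trans (by linarith)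
  have hBAb : |B - A| ≤ 3 * m ^ 6 := (abs_sub B A).trans (by linarith)
  have h1 : |em * (A + B)| ≤ m * a ^ 6 * (3 * m ^ 6) := mbnd hemb hABb
  have h2 : |ep * (B - A)| ≤ m * a ^ 6 * (3 * m ^ 6) := mbnd hepb hBAb
  have h3 : |ep * em| ≤ m ^ 7 * a ^ 6 := by
    have e1 : m ^ 2 ≤ m ^ 7 := powmono hm1 (by norm_num)
    have e2 : a ^ 12 ≤ a ^ 6 := pow_le_pow_of_le_one ha.le ha1 (by norm_num)
    have e3 : m ^ 2 * a ^ 12 ≤ m ^ 7 * a ^ 6 := mul_le_mul e1 e2 (by positivity) (by positivity)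
    calc |ep * em| ≤ m * a ^ 6 * (m * a ^ 6) := mbnd hepb hemb
      _ = m ^ 2 * a ^ 12 := by ring
      _ ≤ m ^ 7 * a ^ 6 := e3
  have hinner : |em * (A + B) + ep * (B - A) + ep * em| ≤ 7 * m ^ 7 * a ^ 6 := by
    have e4 : m * a ^ 6 * (3 * m ^ 6) = 3 * (m ^ 7 * a ^ 6) := by ring
    calc |em * (A + B) + ep * (B - A) + ep * em|
        ≤ |em * (A + B) + ep * (B - A)| + |ep * em| := abs_add_le _ _
      _ ≤ (|em * (A + B)| + |ep * (B - A)|) + |ep * em| := add_le_add (abs_add_le _ _) (le_refl _)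
      _ ≤ 7 * m ^ 7 * a ^ 6 := by rw [e4] at h1 h2; linarith
  have hepem : |ep + em| ≤ 2 * (m * a ^ 6) :=
    (abs_add_le _ _).trans ((add_le_add hepb hemb).trans (le_of_eq (by ring)))
  have hMvinner : |Mv * (em * (A + B) + ep * (B - A) + ep * em)|
      ≤ 2 * m ^ 7 / m₁ ^ 4 * (7 * m ^ 7 * a ^ 6) := mbnd hMb hinner
  -- numerator identity and bound
  have hdp' : dp = A + B + ep := by rw [hEp]; ring
  have hdm' : dm = -A + B + em := by rw [hEm]; ring
  have hnum : dm + dp - Mv * (dm * dp)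
      = (2 * B - Mv * (B ^ 2 - A ^ 2))
        + ((ep + em) - Mv * (em * (A + B) + ep * (B - A) + ep * em)) := by
    rw [hdp', hdm']; ring
  have hnumb : |dm + dp - Mv * (dm * dp)|
      ≤ a ^ 6 * (m ^ 11 / m₁ ^ 4 + 2 * m + 14 * m ^ 14 / m₁ ^ 4) := by
    rw [hnum]
    calc |(2 * B - Mv * (B ^ 2 - A ^ 2))
          + ((ep + em) - Mv * (em * (A + B) + ep * (B - A) + ep * em))|
        ≤ |2 * B - Mv * (B ^ 2 - A ^ 2)|
          + |(ep + em) - Mv * (em * (A + B) + ep * (B - A) + ep * em)| := abs_add_le _ _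
      _ ≤ |2 * B - Mv * (B ^ 2 - A ^ 2)|
          + (|ep + em| + |Mv * (em * (A + B) + ep * (B - A) + ep * em)|) :=
            add_le_add (le_refl _) (abs_sub _ _)
      _ ≤ a ^ 6 * m ^ 11 / m₁ ^ 4
          + (2 * (m * a ^ 6) + 2 * m ^ 7 / m₁ ^ 4 * (7 * m ^ 7 * a ^ 6)) :=
            add_le_add hR (add_le_add hepem hMvinner)
      _ = a ^ 6 * (m ^ 11 / m₁ ^ 4 + 2 * m + 14 * m ^ 14 / m₁ ^ 4) := by ring
  -- final assembly
  have hdm0 : 0 < dm := lt_of_lt_of_le (by positivity) hdm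
  have hdp0 : dp < 0 := lt_of_le_of_lt hdp (by nlinarith)
  have hdmne : dm ≠ 0 := ne_of_gt hdm0
  have hdpne : dp ≠ 0 := ne_of_lt hdp0
  have hgoal : 1 / dm + 1 / dp - Mv = (dm + dp - Mv * (dm * dp)) / (dm * dp) := by
    field_simp; ring
  rw [← hMv, hgoal]
  have hD : m₁ ^ 2 * a ^ 2 ≤ |dm * dp| := by
    rw [abs_mul, abs_of_pos hdm0, abs_of_neg hdp0]
    have hma : m₁ * a ≤ -dp := by linarith
    calc m₁ ^ 2 * a ^ 2 = m₁ * a * (m₁ * a) := by ring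
      _ ≤ dm * -dp := mul_le_mul hdm hma (by positivity) hdm0.le
  calc |(dm + dp - Mv * (dm * dp)) / (dm * dp)|
      = |dm + dp - Mv * (dm * dp)| / |dm * dp| := abs_div _ _
    _ ≤ a ^ 6 * (m ^ 11 / m₁ ^ 4 + 2 * m + 14 * m ^ 14 / m₁ ^ 4) / (m₁ ^ 2 * a ^ 2) :=
        div_le_div₀ (by positivity) hnumb (by positivity) hD
    _ = ((m ^ 11 / m₁ ^ 4 + 2 * m + 14 * m ^ 14 / m₁ ^ 4) / m₁ ^ 2) * a ^ 4 := by
        field_simp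

/-- Expansion of the nearest-neighbour repulsion term: for `C⁶` step-location
functions `φ` with `φ′ ≤ −m₁ < 0` and `|φ^{(k)}| ≤ m₂` (`1 ≤ k ≤ 6`), uniformly in `α` and in
`a ∈ (0, a₀]`,
`1/(φ(α−a)−φ(α)) − 1/(φ(α)−φ(α+a)) = −φ″(α)/φ′(α)² + v₂(α)·a² + O(a⁴)`,
with `a₀, C` depending only on `m₁, m₂`. -/
theorem stmt_11 (m₁ m₂ : ℝ) (hm₁ : 0 < m₁) (hm₂ : 0 < m₂) :
    ∃ a₀ C : ℝ, 0 < a₀ ∧ 0 < C ∧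
      ∀ φ : ℝ → ℝ, ContDiff ℝ 6 φ →
        (∀ α : ℝ, deriv φ α ≤ -m₁) →
        (∀ k : ℕ, 1 ≤ k → k ≤ 6 → ∀ α : ℝ, |iteratedDeriv k φ α| ≤ m₂) →
        ∀ α a : ℝ, 0 < a → a ≤ a₀ →
          |1 / (φ (α - a) - φ α) - 1 / (φ α - φ (α + a))
              - (-(iteratedDeriv 2 φ α) / (deriv φ α) ^ 2)
              - v2coef φ α * a ^ 2|
            ≤ C * a ^ 4 := by
  have hmax : (0:ℝ) < max m₂ 1 := lt_of_lt_of_le one_pos (le_max_right _ _)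
  refine ⟨1, ((max m₂ 1) ^ 11 / m₁ ^ 4 + 2 * max m₂ 1 + 14 * (max m₂ 1) ^ 14 / m₁ ^ 4) / m₁ ^ 2,
    one_pos, by positivity, ?_⟩
  intro φ hφ hd hk α a ha ha1
  have hm1 : (1:ℝ) ≤ max m₂ 1 := le_max_right _ _
  have hm2 : m₂ ≤ max m₂ 1 := le_max_left _ _
  have hb6 : ∀ y, |iteratedDeriv 6 φ y| ≤ m₂ := fun y => hk 6 (by norm_num) (by norm_num) y
  have hdiff : Differentiable ℝ φ := hφ.differentiable (by norm_num)
  have hdp : φ (α + a) - φ α ≤ -(m₁ * a) := by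
    have h := mvt_le hdiff hd (show α < α + a by linarith)
    have e : -m₁ * (α + a - α) = -(m₁ * a) := by ring
    linarith [e ▸ h]
  have hdm : m₁ * a ≤ φ (α - a) - φ α := by
    have h := mvt_le hdiff hd (show α - a < α by linarith)
    have e : -m₁ * (α - (α - a)) = -(m₁ * a) := by ring
    rw [e] at h
    linarith
  have hbp : |deriv φ α| ≤ max m₂ 1 := by
    have h := hk 1 (by norm_num) (by norm_num) α
    rw [iteratedDeriv_one] at h
    exact h.trans hm2
  have hbq : |iteratedDeriv 2 φ α| ≤ max m₂ 1 := (hk 2 (by norm_num) (by norm_num) α).trans hm2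
  have hbr : |iteratedDeriv 3 φ α| ≤ max m₂ 1 := (hk 3 (by norm_num) (by norm_num) α).trans hm2
  have hbs : |iteratedDeriv 4 φ α| ≤ max m₂ 1 := (hk 4 (by norm_num) (by norm_num) α).trans hm2
  have hbt : |iteratedDeriv 5 φ α| ≤ max m₂ 1 := (hk 5 (by norm_num) (by norm_num) α).trans hm2
  have hpm : m₁ ≤ -deriv φ α := by have := hd α; linarith
  have ha6 : (0:ℝ) < a ^ 6 := by positivity
  have hfin : m₂ * a ^ 6 / 120 ≤ max m₂ 1 * a ^ 6 := by
    have h1 := mul_le_mul_of_nonneg_right hm2 ha6.le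
    have h2 := mul_nonneg hm₂.le ha6.le
    linarith
  have hep : |(φ (α + a) - φ α) - (deriv φ α * a + iteratedDeriv 3 φ α * a ^ 3 / 6
      + iteratedDeriv 5 φ α * a ^ 5 / 120 + (iteratedDeriv 2 φ α * a ^ 2 / 2
      + iteratedDeriv 4 φ α * a ^ 4 / 24))| ≤ max m₂ 1 * a ^ 6 := by
    have h := taylor6 hφ hb6 α a ha
    rw [iteratedDeriv_one] at h
    have heq : φ (α + a) - (φ α + deriv φ α * a + iteratedDeriv 2 φ α * a ^ 2 / 2
        + iteratedDeriv 3 φ α * a ^ 3 / 6 + iteratedDeriv 4 φ α * a ^ 4 / 24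
        + iteratedDeriv 5 φ α * a ^ 5 / 120)
        = (φ (α + a) - φ α) - (deriv φ α * a + iteratedDeriv 3 φ α * a ^ 3 / 6
          + iteratedDeriv 5 φ α * a ^ 5 / 120 + (iteratedDeriv 2 φ α * a ^ 2 / 2
          + iteratedDeriv 4 φ α * a ^ 4 / 24)) := by ring
    rw [heq] at h
    exact h.trans hfin
  have hg : ContDiff ℝ 6 fun y => φ (-y) := hφ.comp contDiff_neg
  have hb6' : ∀ y, |iteratedDeriv 6 (fun y => φ (-y)) y| ≤ m₂ := by
    intro y
    rw [iteratedDeriv_comp_neg]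
    norm_num
    exact hb6 (-y)
  have hTm := taylor6 hg hb6' (-α) a ha
  simp only [iteratedDeriv_comp_neg, smul_eq_mul, neg_neg] at hTm
  rw [show -α + a = -(α - a) from by ring] at hTm
  simp only [neg_neg] at hTm
  norm_num at hTm
  have hem : |(φ (α - a) - φ α) - (-(deriv φ α * a + iteratedDeriv 3 φ α * a ^ 3 / 6
      + iteratedDeriv 5 φ α * a ^ 5 / 120) + (iteratedDeriv 2 φ α * a ^ 2 / 2
      + iteratedDeriv 4 φ α * a ^ 4 / 24))| ≤ max m₂ 1 * a ^ 6 := by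
    have heq : φ (α - a) - (φ α + -(deriv φ α * a) + iteratedDeriv 2 φ α * a ^ 2 / 2
        + -(iteratedDeriv 3 φ α * a ^ 3) / 6 + iteratedDeriv 4 φ α * a ^ 4 / 24
        + -(iteratedDeriv 5 φ α * a ^ 5) / 120)
        = (φ (α - a) - φ α) - (-(deriv φ α * a + iteratedDeriv 3 φ α * a ^ 3 / 6
          + iteratedDeriv 5 φ α * a ^ 5 / 120) + (iteratedDeriv 2 φ α * a ^ 2 / 2
          + iteratedDeriv 4 φ α * a ^ 4 / 24)) := by ring
    rw [heq] at hTm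
    exact hTm.trans hfin
  have hcore := core m₁ (max m₂ 1) a (deriv φ α) (iteratedDeriv 2 φ α) (iteratedDeriv 3 φ α)
    (iteratedDeriv 4 φ α) (iteratedDeriv 5 φ α) (φ (α - a) - φ α) (φ (α + a) - φ α)
    hm1 hm₁ ha ha1 hbp hbq hbr hbs hbt hpm hdp hdm hep hem
  refine le_trans (le_of_eq (congrArg abs ?_)) hcore
  have hdpne : φ α - φ (α + a) ≠ 0 := by nlinarith
  rw [show φ α - φ (α + a) = -(φ (α + a) - φ α) from by ring, div_neg]
  simp only [v2coef]
  ring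
end
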